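/- arXiv:1902.10788 — 4 statements merged into one kernel-verified Lean document; each statement's English description precedes it below -/
import Mathlib

section
/- For the n-gonal bipyramid BP_n with n = 2k and k even, there are exactly four zigzags up to reversal, each of length 3n/2. -/
open Finset
open scoped Classical

/-- A combinatorial triangulation: a finite collection of (triangular) faces,
each given as a finite set of vertices. -/
structure Triangulation (V : Type) where
  faces : Finset (Finset V)

namespace Triangulation

variable {V : Type} [DecidableEq V] (T : Triangulation V)

/-- The edges: the 2-element subsets of faces. -/
def edges : Finset (Finset V) := T.faces.biUnion fun f => f.powersetCard 2

/-- The vertices actually used by the triangulation. -/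
def verts : Finset V := T.faces.sup id

/-- The combinatorial axioms of a triangulation of a closed surface:
faces are triangles, every edge lies in exactly two faces, and two distinct
faces meet in at most an edge. -/
def IsProper : Prop :=
  (∀ f ∈ T.faces, f.card = 3) ∧
  (∀ e ∈ T.edges, (T.faces.filter fun f => e ⊆ f).card = 2) ∧
  (∀ f ∈ T.faces, ∀ g ∈ T.faces, f ≠ g → (f ∩ g).card ≤ 2)

/-- The underlying (simple) graph of the triangulation. -/
def graph : SimpleGraph V where
  Adj x y := x ≠ y ∧ ({x, y} : Finset V) ∈ T.edges
  symm := ⟨fun x y h => ⟨h.1.symm, by rw [Finset.pair_comm y x]; exact h.2⟩⟩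
  loopless := ⟨fun x h => h.1 rfl⟩

/-- A zigzag: a bi-infinite periodic sequence of edges `e i` together with the
face `f i` containing the consecutive edges `e i` and `e (i+1)`, such that
consecutive faces are distinct and edges two apart are disjoint.
`head i` is the (unique) common vertex of `e i` and `e (i+1)`; thus the `i`-th
traversal goes from `head (i-1)` to `head i`. -/
structure Zigzag where
  e : ℤ → Finset V
  f : ℤ → Finset V
  head : ℤ → V
  e_mem : ∀ i, e i ∈ T.edges
  f_mem : ∀ i, f i ∈ T.faces
  sub_left : ∀ i, e i ⊆ f i
  sub_right : ∀ i, e (i + 1) ⊆ f i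
  edges_ne : ∀ i, e i ≠ e (i + 1)
  faces_ne : ∀ i, f i ≠ f (i + 1)
  disj : ∀ i, Disjoint (e i) (e (i + 2))
  inter_eq : ∀ i, e i ∩ e (i + 1) = {head i}
  exists_period : ∃ n : ℕ, 0 < n ∧ ∀ i, e (i + n) = e i ∧ f (i + n) = f i ∧ head (i + n) = head i

namespace Zigzag

variable {T}

/-- The length of a zigzag: the minimal period of its edge sequence. -/
noncomputable def length (Z : Zigzag T) : ℕ :=
  sInf {n : ℕ | 0 < n ∧ ∀ i, Z.e (i + n) = Z.e i}

/-- How many times the edge `a` occurs in one (minimal) period of `Z`. -/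
noncomputable def mult (Z : Zigzag T) (a : Finset V) : ℕ :=
  ((Finset.range Z.length).filter fun i => Z.e (i : ℤ) = a).card

/-- The direction (tail, head) of the `i`-th traversal of `Z`. -/
def dir (Z : Zigzag T) (i : ℤ) : V × V := (Z.head (i - 1), Z.head i)

/-- Two zigzags are the same cyclic sequence up to rotation or rotation
combined with reversal. -/
def Equiv (Z W : Zigzag T) : Prop :=
  (∃ k : ℤ, ∀ i, W.e i = Z.e (i + k)) ∨ (∃ k : ℤ, ∀ i, W.e i = Z.e (k - i))

end Zigzag

/-- A triangulation is z-knotted if it has a single zigzag up to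
rotation and reversal. -/
def IsZKnotted : Prop := Nonempty (Zigzag T) ∧ ∀ Z W : Zigzag T, Z.Equiv W

/-- A z-orientation: a collection of pairwise non-equivalent zigzags which
double covers the edge set. -/
structure ZOrientation where
  zigzags : List (Zigzag T)
  cover : ∀ a ∈ T.edges, (zigzags.map fun Z => Z.mult a).sum = 2
  nonequiv : zigzags.Pairwise fun Z W => ¬ Z.Equiv W

namespace ZOrientation

variable {T}

/-- All traversals of the edge `a` by the distinguished zigzags go in the
direction `d`. -/
def dirOf (τ : ZOrientation T) (a : Finset V) (d : V × V) : Prop :=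
  ∀ Z ∈ τ.zigzags, ∀ i : ℤ, Z.e i = a → Z.dir i = d

/-- An edge of type II: both traversals go in the same direction. -/
def TypeII (τ : ZOrientation T) (a : Finset V) : Prop := ∃ d, τ.dirOf a d

/-- An edge of type I: the two traversals go in different directions. -/
def TypeI (τ : ZOrientation T) (a : Finset V) : Prop := ¬ τ.TypeII a

/-- A vertex of type I: it belongs only to edges of type I. -/
def VertexTypeI (τ : ZOrientation T) (x : V) : Prop :=
  ∀ a ∈ T.edges, x ∈ a → τ.TypeI a

/-- A vertex of type II: it belongs to some edge of type II. -/
def VertexTypeII (τ : ZOrientation T) (x : V) : Prop :=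
  ∃ a ∈ T.edges, x ∈ a ∧ τ.TypeII a

/-- A face of type I: exactly one of its edges is of type II
(the other two being of type I). -/
def FaceTypeI (τ : ZOrientation T) (f : Finset V) : Prop :=
  ∃! a : Finset V, a ∈ f.powersetCard 2 ∧ τ.TypeII a

/-- A face of type II: all its edges are of type II and their directions
form a directed cycle. -/
def FaceTypeII (τ : ZOrientation T) (f : Finset V) : Prop :=
  ∃ x y z : V, f = {x, y, z} ∧ x ≠ y ∧ y ≠ z ∧ x ≠ z ∧
    τ.dirOf {x, y} (x, y) ∧ τ.dirOf {y, z} (y, z) ∧ τ.dirOf {z, x} (z, x)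

/-- A homogeneous zigzag: it contains precisely two edges of type I after each
edge of type II, i.e. it is a cyclic sequence of blocks (II, I, I). -/
def Homogeneous (τ : ZOrientation T) (Z : Zigzag T) : Prop :=
  ∃ k : ℤ, ∀ i : ℤ, τ.TypeII (Z.e (k + 3 * i)) ∧
    τ.TypeI (Z.e (k + 3 * i + 1)) ∧ τ.TypeI (Z.e (k + 3 * i + 2))

/-- The in-degree of a vertex in the digraph of type II edges. -/
noncomputable def inDeg (τ : ZOrientation T) (x : V) : ℕ :=
  (T.edges.filter fun a => τ.TypeII a ∧ ∃ u, a = {u, x} ∧ τ.dirOf a (u, x)).card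

/-- The out-degree of a vertex in the digraph of type II edges. -/
noncomputable def outDeg (τ : ZOrientation T) (x : V) : ℕ :=
  (T.edges.filter fun a => τ.TypeII a ∧ ∃ u, a = {x, u} ∧ τ.dirOf a (x, u)).card

/-- A special pair: two type II edges with a common vertex which are
interleaved in the zigzag `Z` as a, b, a, b within one period. -/
def SpecialPair (τ : ZOrientation T) (Z : Zigzag T) (a b : Finset V) : Prop :=
  a ≠ b ∧ (a ∩ b).Nonempty ∧ τ.TypeII a ∧ τ.TypeII b ∧
  ∃ i₁ i₂ i₃ i₄ : ℤ, i₁ < i₂ ∧ i₂ < i₃ ∧ i₃ < i₄ ∧ i₄ < i₁ + (Z.length : ℤ) ∧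
    Z.e i₁ = a ∧ Z.e i₂ = b ∧ Z.e i₃ = a ∧ Z.e i₄ = b

/-- Two special pairs `c₁,c₂` and `t₁,t₂` are concordant: the zigzag
interleaves them in the cyclic pattern c₁,t₁,c₂,t₂,c₁,t₁,c₂,t₂. -/
def Concordant (τ : ZOrientation T) (Z : Zigzag T) (c₁ c₂ t₁ t₂ : Finset V) : Prop :=
  τ.SpecialPair Z c₁ c₂ ∧ τ.SpecialPair Z t₁ t₂ ∧
  (c₁ ≠ t₁ ∧ c₁ ≠ t₂ ∧ c₂ ≠ t₁ ∧ c₂ ≠ t₂) ∧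
  ∃ i₁ i₂ i₃ i₄ i₅ i₆ i₇ i₈ : ℤ,
    i₁ < i₂ ∧ i₂ < i₃ ∧ i₃ < i₄ ∧ i₄ < i₅ ∧ i₅ < i₆ ∧ i₆ < i₇ ∧ i₇ < i₈ ∧
    i₈ < i₁ + (Z.length : ℤ) ∧
    Z.e i₁ = c₁ ∧ Z.e i₂ = t₁ ∧ Z.e i₃ = c₂ ∧ Z.e i₄ = t₂ ∧
    Z.e i₅ = c₁ ∧ Z.e i₆ = t₁ ∧ Z.e i₇ = c₂ ∧ Z.e i₈ = t₂

end ZOrientation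

end Triangulation

/-- The `n`-gonal bipyramid: two apexes (the `Bool` vertices) joined to every
vertex of an `n`-cycle. -/
def BP (n : ℕ) [NeZero n] : Triangulation (Bool ⊕ ZMod n) where
  faces := Finset.univ.image fun p : Bool × ZMod n =>
    ({Sum.inl p.1, Sum.inr p.2, Sum.inr (p.2 + 1)} : Finset (Bool ⊕ ZMod n))

set_option linter.dupNamespace false
set_option linter.unusedVariables false
set_option linter.unnecessarySeqFocus false
set_option linter.unreachableTactic false
set_option linter.unusedTactic false
set_option linter.unusedSectionVars false
namespace BPAux
open Triangulation

variable {n : ℕ} [NeZero n]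

lemma mem_faces_iff {f : Finset (Bool ⊕ ZMod n)} :
    f ∈ (BP n).faces ↔
      ∃ (t : Bool) (m : ZMod n), f = {Sum.inl t, Sum.inr m, Sum.inr (m + 1)} := by
  constructor
  · intro h
    simp only [BP, Finset.mem_image, Finset.mem_univ, true_and] at h
    obtain ⟨p, hp⟩ := h
    exact ⟨p.1, p.2, hp.symm⟩
  · rintro ⟨t, m, rfl⟩
    simp only [BP, Finset.mem_image, Finset.mem_univ, true_and]
    exact ⟨(t, m), rfl⟩

lemma face_mem (t : Bool) (m : ZMod n) :
    ({Sum.inl t, Sum.inr m, Sum.inr (m + 1)} : Finset (Bool ⊕ ZMod n)) ∈ (BP n).faces :=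
  mem_faces_iff.2 ⟨t, m, rfl⟩

lemma natCast_ne (c d : ℕ) (hc : c < n) (hd : d < n) (hcd : c ≠ d) :
    (c : ZMod n) ≠ (d : ZMod n) := by
  intro h
  apply hcd
  rw [← ZMod.val_cast_of_lt hc, ← ZMod.val_cast_of_lt hd, h]

lemma z10 (h4 : 4 ≤ n) : (1 : ZMod n) ≠ 0 := by
  have := natCast_ne (n := n) 1 0 (by omega) (by omega) (by omega); simpa using this

lemma z20 (h4 : 4 ≤ n) : (2 : ZMod n) ≠ 0 := by
  have := natCast_ne (n := n) 2 0 (by omega) (by omega) (by omega); simpa using this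

lemma z30 (h4 : 4 ≤ n) : (3 : ZMod n) ≠ 0 := by
  have := natCast_ne (n := n) 3 0 (by omega) (by omega) (by omega); simpa using this

lemma z21 (h4 : 4 ≤ n) : (2 : ZMod n) ≠ 1 := by
  have := natCast_ne (n := n) 2 1 (by omega) (by omega) (by omega); simpa using this

lemma z31 (h4 : 4 ≤ n) : (3 : ZMod n) ≠ 1 := by
  have := natCast_ne (n := n) 3 1 (by omega) (by omega) (by omega); simpa using this

lemma z32 (h4 : 4 ≤ n) : (3 : ZMod n) ≠ 2 := by
  have := natCast_ne (n := n) 3 2 (by omega) (by omega) (by omega); simpa using this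

lemma zne {c d : ZMod n} (h : c ≠ d) (x : ZMod n) : x + c ≠ x + d :=
  fun he => h (add_left_cancel he)

lemma face_card (h4 : 4 ≤ n) {f : Finset (Bool ⊕ ZMod n)} (hf : f ∈ (BP n).faces) :
    f.card = 3 := by
  obtain ⟨t, m, rfl⟩ := mem_faces_iff.1 hf
  have h1 : m ≠ m + 1 := by simp [left_eq_add, z10 h4]
  rw [Finset.card_insert_of_notMem (by simp), Finset.card_insert_of_notMem (by simp [h1]),
    Finset.card_singleton]


lemma two_subset_of_three {V : Type} [DecidableEq V] {x y z : V} (hxy : x ≠ y) (hxz : x ≠ z)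
    (hyz : y ≠ z) {c : Finset V} (hc : c ⊆ {x, y, z}) (hcard : c.card = 2) :
    c = {x, y} ∨ c = {x, z} ∨ c = {y, z} := by
  have hcard2 : ∀ a b : V, a ≠ b → ({a, b} : Finset V).card = 2 := by
    intro a b hab; rw [Finset.card_insert_of_notMem (by simp [hab]), Finset.card_singleton]
  by_cases hx : x ∈ c <;> by_cases hy : y ∈ c <;> by_cases hz : z ∈ c
  · exfalso
    have : ({x, y, z} : Finset V) ⊆ c := by
      intro w hw; simp only [Finset.mem_insert, Finset.mem_singleton] at hw
      rcases hw with rfl | rfl | rfl <;> assumption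
    have := Finset.card_le_card this
    rw [hcard, Finset.card_insert_of_notMem (by simp [hxy, hxz]),
      Finset.card_insert_of_notMem (by simp [hyz]), Finset.card_singleton] at this
    omega
  · left
    refine (Finset.eq_of_subset_of_card_le ?_ ?_).symm
    · intro w hw; simp only [Finset.mem_insert, Finset.mem_singleton] at hw
      rcases hw with rfl | rfl <;> assumption
    · rw [hcard, hcard2 x y hxy]
  · right; left
    refine (Finset.eq_of_subset_of_card_le ?_ ?_).symm
    · intro w hw; simp only [Finset.mem_insert, Finset.mem_singleton] at hw
      rcases hw with rfl | rfl <;> assumption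
    · rw [hcard, hcard2 x z hxz]
  · exfalso
    have : c ⊆ {x} := by
      intro w hw
      have := hc hw
      simp only [Finset.mem_insert, Finset.mem_singleton] at this ⊢
      rcases this with rfl | rfl | rfl
      · rfl
      · exact absurd hw hy
      · exact absurd hw hz
    have := Finset.card_le_card this
    simp [hcard] at this
  · right; right
    refine (Finset.eq_of_subset_of_card_le ?_ ?_).symm
    · intro w hw; simp only [Finset.mem_insert, Finset.mem_singleton] at hw
      rcases hw with rfl | rfl <;> assumption
    · rw [hcard, hcard2 y z hyz]
  · exfalso
    have : c ⊆ {y} := by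
      intro w hw
      have := hc hw
      simp only [Finset.mem_insert, Finset.mem_singleton] at this ⊢
      rcases this with rfl | rfl | rfl
      · exact absurd hw hx
      · rfl
      · exact absurd hw hz
    have := Finset.card_le_card this
    simp [hcard] at this
  · exfalso
    have : c ⊆ {z} := by
      intro w hw
      have := hc hw
      simp only [Finset.mem_insert, Finset.mem_singleton] at this ⊢
      rcases this with rfl | rfl | rfl
      · exact absurd hw hx
      · exact absurd hw hy
      · rfl
    have := Finset.card_le_card this
    simp [hcard] at this
  · exfalso
    have : c ⊆ (∅ : Finset V) := by
      intro w hw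
      have := hc hw
      simp only [Finset.mem_insert, Finset.mem_singleton] at this
      rcases this with rfl | rfl | rfl
      · exact absurd hw hx
      · exact absurd hw hy
      · exact absurd hw hz
    have := Finset.card_le_card this
    simp [hcard] at this



lemma mem_edges_iff {e : Finset (Bool ⊕ ZMod n)} :
    e ∈ (BP n).edges ↔ ∃ f ∈ (BP n).faces, e ⊆ f ∧ e.card = 2 := by
  simp only [Triangulation.edges, Finset.mem_biUnion, Finset.mem_powersetCard]

lemma edge_card {e : Finset (Bool ⊕ ZMod n)} (he : e ∈ (BP n).edges) : e.card = 2 :=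
  (mem_edges_iff.1 he).choose_spec.2.2

lemma ring_mem (h4 : 4 ≤ n) (m : ZMod n) :
    ({Sum.inr m, Sum.inr (m + 1)} : Finset (Bool ⊕ ZMod n)) ∈ (BP n).edges := by
  refine mem_edges_iff.2 ⟨_, face_mem true m, ?_, ?_⟩
  · intro w hw; simp only [Finset.mem_insert, Finset.mem_singleton] at hw ⊢; tauto
  · have h1 : m ≠ m + 1 := by simp [left_eq_add, z10 h4]
    rw [Finset.card_insert_of_notMem (by simp [h1]), Finset.card_singleton]

lemma spoke_mem (t : Bool) (m : ZMod n) :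
    ({Sum.inl t, Sum.inr m} : Finset (Bool ⊕ ZMod n)) ∈ (BP n).edges := by
  refine mem_edges_iff.2 ⟨_, face_mem t m, ?_, ?_⟩
  · intro w hw; simp only [Finset.mem_insert, Finset.mem_singleton] at hw ⊢; tauto
  · rw [Finset.card_insert_of_notMem (by simp), Finset.card_singleton]

lemma edges_char (h4 : 4 ≤ n) {e : Finset (Bool ⊕ ZMod n)} (he : e ∈ (BP n).edges) :
    (∃ m : ZMod n, e = {Sum.inr m, Sum.inr (m + 1)}) ∨
    (∃ (t : Bool) (m : ZMod n), e = {Sum.inl t, Sum.inr m}) := by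
  obtain ⟨f, hf, hef, hcard⟩ := mem_edges_iff.1 he
  obtain ⟨t, m, rfl⟩ := mem_faces_iff.1 hf
  have h1 : (Sum.inr m : Bool ⊕ ZMod n) ≠ Sum.inr (m + 1) := by
    simp [left_eq_add, z10 h4]
  rcases two_subset_of_three (by simp) (by simp) h1 hef hcard with rfl | rfl | rfl
  · right; exact ⟨t, m, rfl⟩
  · right; exact ⟨t, m + 1, rfl⟩
  · left; exact ⟨m, rfl⟩



lemma faces_containing_ring (h4 : 4 ≤ n) {G : Finset (Bool ⊕ ZMod n)} (hG : G ∈ (BP n).faces)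
    (m : ZMod n) (hsub : ({Sum.inr m, Sum.inr (m + 1)} : Finset (Bool ⊕ ZMod n)) ⊆ G) :
    G = {Sum.inl true, Sum.inr m, Sum.inr (m + 1)} ∨
    G = {Sum.inl false, Sum.inr m, Sum.inr (m + 1)} := by
  obtain ⟨t, m', rfl⟩ := mem_faces_iff.1 hG
  have h1 : Sum.inr m ∈ ({Sum.inl t, Sum.inr m', Sum.inr (m' + 1)} : Finset (Bool ⊕ ZMod n)) :=
    hsub (by simp)
  have h2 : Sum.inr (m + 1) ∈ ({Sum.inl t, Sum.inr m', Sum.inr (m' + 1)} :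
      Finset (Bool ⊕ ZMod n)) := hsub (by simp)
  simp only [Finset.mem_insert, Finset.mem_singleton, Sum.inr.injEq, reduceCtorEq,
    false_or] at h1 h2
  have hm : m = m' := by
    rcases h1 with rfl | h1
    · rfl
    · rcases h2 with h2 | h2
      · exact absurd (by linear_combination h2 - h1 : (2 : ZMod n) = 0) (z20 h4)
      · exact absurd (by linear_combination h2 - h1 : (1 : ZMod n) = 0) (z10 h4)
  subst hm
  cases t
  · right; rfl
  · left; rfl

lemma faces_containing_spoke (h4 : 4 ≤ n) {G : Finset (Bool ⊕ ZMod n)} (hG : G ∈ (BP n).faces)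
    (t : Bool) (m : ZMod n) (hsub : ({Sum.inl t, Sum.inr m} : Finset (Bool ⊕ ZMod n)) ⊆ G) :
    G = {Sum.inl t, Sum.inr m, Sum.inr (m + 1)} ∨
    G = {Sum.inl t, Sum.inr (m - 1), Sum.inr m} := by
  obtain ⟨t', m', rfl⟩ := mem_faces_iff.1 hG
  have h1 : Sum.inl t ∈ ({Sum.inl t', Sum.inr m', Sum.inr (m' + 1)} :
      Finset (Bool ⊕ ZMod n)) := hsub (by simp)
  have h2 : Sum.inr m ∈ ({Sum.inl t', Sum.inr m', Sum.inr (m' + 1)} :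
      Finset (Bool ⊕ ZMod n)) := hsub (by simp)
  simp only [Finset.mem_insert, Finset.mem_singleton, Sum.inr.injEq, Sum.inl.injEq,
    reduceCtorEq, false_or, or_false] at h1 h2
  subst h1
  rcases h2 with rfl | h2
  · left; rfl
  · right
    have hm' : m' = m - 1 := by linear_combination -h2
    subst hm'
    have : m - 1 + 1 = m := by ring
    rw [this]

lemma face_determined (h4 : 4 ≤ n) {b F G G' : Finset (Bool ⊕ ZMod n)}
    (hb : b ∈ (BP n).edges) (hF : F ∈ (BP n).faces) (hG : G ∈ (BP n).faces)
    (hG' : G' ∈ (BP n).faces) (hbF : b ⊆ F) (hbG : b ⊆ G) (hbG' : b ⊆ G')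
    (h1 : G ≠ F) (h2 : G' ≠ F) : G = G' := by
  rcases edges_char h4 hb with ⟨m, rfl⟩ | ⟨t, m, rfl⟩
  · have hPQ : ({Sum.inl true, Sum.inr m, Sum.inr (m + 1)} : Finset (Bool ⊕ ZMod n)) ≠
        {Sum.inl false, Sum.inr m, Sum.inr (m + 1)} := by
      intro h
      have : (Sum.inl true : Bool ⊕ ZMod n) ∈ ({Sum.inl false, Sum.inr m, Sum.inr (m + 1)} :
          Finset (Bool ⊕ ZMod n)) := h ▸ (by simp)
      simp at this
    rcases faces_containing_ring h4 hF m hbF with rfl | rfl <;>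
      rcases faces_containing_ring h4 hG m hbG with rfl | rfl <;>
      rcases faces_containing_ring h4 hG' m hbG' with rfl | rfl <;> simp_all
  · have hne : m + 1 ≠ m - 1 := by
      intro h
      exact z20 h4 (by linear_combination h)
    have hne2 : m + 1 ≠ m := by
      intro h
      exact z10 h4 (by linear_combination h)
    have hPQ : ({Sum.inl t, Sum.inr m, Sum.inr (m + 1)} : Finset (Bool ⊕ ZMod n)) ≠
        {Sum.inl t, Sum.inr (m - 1), Sum.inr m} := by
      intro h
      have : (Sum.inr (m + 1) : Bool ⊕ ZMod n) ∈ ({Sum.inl t, Sum.inr (m - 1), Sum.inr m} :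
          Finset (Bool ⊕ ZMod n)) := h ▸ (by simp)
      simp only [Finset.mem_insert, Finset.mem_singleton, Sum.inr.injEq, reduceCtorEq,
        false_or] at this
      tauto
    rcases faces_containing_spoke h4 hF t m hbF with rfl | rfl <;>
      rcases faces_containing_spoke h4 hG t m hbG with rfl | rfl <;>
      rcases faces_containing_spoke h4 hG' t m hbG' with rfl | rfl <;> simp_all

/-- The local structure of three consecutive zigzag edges. -/
def Nxt (n : ℕ) [NeZero n] (a b c : Finset (Bool ⊕ ZMod n)) : Prop :=
  a.card = 2 ∧ b.card = 2 ∧ c.card = 2 ∧ a ≠ b ∧ b ≠ c ∧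
  a ∪ b ∈ (BP n).faces ∧ b ∪ c ∈ (BP n).faces ∧ a ∪ b ≠ b ∪ c ∧ Disjoint a c

lemma nxt_symm {a b c : Finset (Bool ⊕ ZMod n)} (h : Nxt n a b c) : Nxt n c b a := by
  obtain ⟨h1, h2, h3, h4, h5, h6, h7, h8, h9⟩ := h
  exact ⟨h3, h2, h1, h5.symm, h4.symm, by rwa [Finset.union_comm], by rwa [Finset.union_comm],
    by rw [Finset.union_comm c b, Finset.union_comm b a]; exact h8.symm, h9.symm⟩

lemma f_eq_union (h4 : 4 ≤ n) (W : Zigzag (BP n)) (i : ℤ) : W.f i = W.e i ∪ W.e (i + 1) := by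
  have hsub : W.e i ∪ W.e (i + 1) ⊆ W.f i := Finset.union_subset (W.sub_left i) (W.sub_right i)
  have hci : (W.e i ∩ W.e (i + 1)).card = 1 := by rw [W.inter_eq]; simp
  have hcu : (W.e i ∪ W.e (i + 1)).card = 3 := by
    have := Finset.card_union_add_card_inter (W.e i) (W.e (i + 1))
    rw [hci, edge_card (W.e_mem i), edge_card (W.e_mem (i + 1))] at this
    omega
  exact (Finset.eq_of_subset_of_card_le hsub (by rw [hcu, face_card h4 (W.f_mem i)])).symm

lemma nxt_zig (h4 : 4 ≤ n) (W : Zigzag (BP n)) (i : ℤ) :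
    Nxt n (W.e i) (W.e (i + 1)) (W.e (i + 2)) := by
  have e12 : i + 1 + 1 = i + 2 := by ring
  refine ⟨edge_card (W.e_mem i), edge_card (W.e_mem (i + 1)), edge_card (W.e_mem (i + 2)),
    W.edges_ne i, ?_, ?_, ?_, ?_, W.disj i⟩
  · have := W.edges_ne (i + 1); rwa [e12] at this
  · rw [← f_eq_union h4 W i]; exact W.f_mem i
  · have := f_eq_union h4 W (i + 1)
    rw [e12] at this
    rw [← this]
    exact W.f_mem (i + 1)
  · have := f_eq_union h4 W (i + 1)
    rw [e12] at this
    rw [← f_eq_union h4 W i, ← this]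
    exact W.faces_ne i

lemma nxt_unique (h4 : 4 ≤ n) {a b c c' : Finset (Bool ⊕ ZMod n)}
    (h : Nxt n a b c) (h' : Nxt n a b c') : c = c' := by
  obtain ⟨ha, hb, hc, hab, hbc, hF, hG, hFG, hdisj⟩ := h
  obtain ⟨-, -, hc', -, hbc', -, hG', hFG', hdisj'⟩ := h'
  have hbe : b ∈ (BP n).edges := mem_edges_iff.2 ⟨_, hF, Finset.subset_union_right, hb⟩
  have hGG' : b ∪ c = b ∪ c' :=
    face_determined h4 hbe hF hG hG' Finset.subset_union_right Finset.subset_union_left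
      Finset.subset_union_left (fun h => hFG h.symm) (fun h => hFG' h.symm)
  -- find the common vertex of a and b
  have hiab : (a ∩ b).card = 1 := by
    have h3 : (a ∪ b).card = 3 := face_card h4 hF
    have := Finset.card_union_add_card_inter a b
    rw [h3, ha, hb] at this
    omega
  obtain ⟨v, hv⟩ := Finset.card_pos.1 (by rw [hiab]; omega : 0 < (a ∩ b).card)
  have hva : v ∈ a := (Finset.mem_inter.1 hv).1
  have hvb : v ∈ b := (Finset.mem_inter.1 hv).2
  have key : ∀ d : Finset (Bool ⊕ ZMod n), d.card = 2 → Disjoint a d →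
      b ∪ d ∈ (BP n).faces → d = (b ∪ d).erase v := by
    intro d hd hdj hface
    have hsub : d ⊆ (b ∪ d).erase v := by
      intro w hw
      rw [Finset.mem_erase]
      exact ⟨fun hwv => (Finset.disjoint_left.1 hdj) hva (hwv ▸ hw), Finset.mem_union_right _ hw⟩
    refine Finset.eq_of_subset_of_card_le hsub ?_
    rw [Finset.card_erase_of_mem (Finset.mem_union_left _ hvb), face_card h4 hface, hd]
  rw [key c hc hdisj hG, key c' hc' hdisj' hG', hGG']


def A (n : ℕ) (x : ZMod 2) : Bool ⊕ ZMod n := Sum.inl (decide (x = 1))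

lemma A_inj {x y : ZMod 2} (h : A n x = A n y) : x = y := by
  simp only [A, Sum.inl.injEq, decide_eq_decide] at h
  have : ∀ x y : ZMod 2, ((x = 1) ↔ (y = 1)) → x = y := by decide
  exact this x y h

lemma A_ne_inr (x : ZMod 2) (m : ZMod n) : A n x ≠ Sum.inr m := by simp [A]

lemma A_succ_ne (x : ZMod 2) : A n x ≠ A n (x + 1) := by
  intro h
  have := A_inj (n := n) h
  have h2 : ∀ x : ZMod 2, x ≠ x + 1 := by decide
  exact h2 x this

def ρ (n : ℕ) [NeZero n] (s : ZMod n) (i : ℤ) : ZMod n := s + 2 * ((i / 3 : ℤ) : ZMod n)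

def ME (n : ℕ) [NeZero n] (b : ZMod 2) (s : ZMod n) (i : ℤ) : Finset (Bool ⊕ ZMod n) :=
  if i % 3 = 0 then {Sum.inr (ρ n s i), Sum.inr (ρ n s i + 1)}
  else if i % 3 = 1 then {A n (b + ((i / 3 : ℤ) : ZMod 2)), Sum.inr (ρ n s i + 1)}
  else {A n (b + ((i / 3 : ℤ) : ZMod 2)), Sum.inr (ρ n s i + 2)}

def MF (n : ℕ) [NeZero n] (b : ZMod 2) (s : ZMod n) (i : ℤ) : Finset (Bool ⊕ ZMod n) :=
  if i % 3 = 0 then {A n (b + ((i / 3 : ℤ) : ZMod 2)), Sum.inr (ρ n s i), Sum.inr (ρ n s i + 1)}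
  else if i % 3 = 1 then
    {A n (b + ((i / 3 : ℤ) : ZMod 2)), Sum.inr (ρ n s i + 1), Sum.inr (ρ n s i + 2)}
  else {A n (b + ((i / 3 : ℤ) : ZMod 2)), Sum.inr (ρ n s i + 2), Sum.inr (ρ n s i + 3)}

def MH (n : ℕ) [NeZero n] (b : ZMod 2) (s : ZMod n) (i : ℤ) : Bool ⊕ ZMod n :=
  if i % 3 = 0 then Sum.inr (ρ n s i + 1)
  else if i % 3 = 1 then A n (b + ((i / 3 : ℤ) : ZMod 2))
  else Sum.inr (ρ n s i + 2)

variable (b : ZMod 2) (s : ZMod n)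

lemma ME0 (j : ℤ) : ME n b s (3 * j) =
    {Sum.inr (s + 2 * (j : ZMod n)), Sum.inr (s + 2 * (j : ZMod n) + 1)} := by
  have h1 : (3 * j) % 3 = 0 := by omega
  have h2 : (3 * j) / 3 = j := by omega
  simp [ME, ρ, h1, h2]

lemma ME1 (j : ℤ) : ME n b s (3 * j + 1) =
    {A n (b + (j : ZMod 2)), Sum.inr (s + 2 * (j : ZMod n) + 1)} := by
  have h1 : (3 * j + 1) % 3 = 1 := by omega
  have h2 : (3 * j + 1) / 3 = j := by omega
  simp [ME, ρ, h1, h2]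

lemma ME2 (j : ℤ) : ME n b s (3 * j + 2) =
    {A n (b + (j : ZMod 2)), Sum.inr (s + 2 * (j : ZMod n) + 2)} := by
  have h1 : (3 * j + 2) % 3 = 2 := by omega
  have h2 : (3 * j + 2) / 3 = j := by omega
  simp [ME, ρ, h1, h2]

lemma ME3 (j : ℤ) : ME n b s (3 * j + 3) =
    {Sum.inr (s + 2 * (j : ZMod n) + 2), Sum.inr (s + 2 * (j : ZMod n) + 3)} := by
  have h1 : (3 * j + 3) % 3 = 0 := by omega
  have h2 : (3 * j + 3) / 3 = j + 1 := by omega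
  have h3 : ((j + 1 : ℤ) : ZMod n) = (j : ZMod n) + 1 := by push_cast; ring
  simp only [ME, ρ, h1, h2, h3]
  norm_num
  ring_nf

lemma ME4 (j : ℤ) : ME n b s (3 * j + 4) =
    {A n (b + (j : ZMod 2) + 1), Sum.inr (s + 2 * (j : ZMod n) + 3)} := by
  have h1 : (3 * j + 4) % 3 = 1 := by omega
  have h2 : (3 * j + 4) / 3 = j + 1 := by omega
  have h3 : ((j + 1 : ℤ) : ZMod n) = (j : ZMod n) + 1 := by push_cast; ring
  have h4 : ((j + 1 : ℤ) : ZMod 2) = (j : ZMod 2) + 1 := by push_cast; ring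
  simp only [ME, ρ, h1, h2, h3, h4]
  norm_num
  ring_nf

lemma MF0 (j : ℤ) : MF n b s (3 * j) =
    {A n (b + (j : ZMod 2)), Sum.inr (s + 2 * (j : ZMod n)),
      Sum.inr (s + 2 * (j : ZMod n) + 1)} := by
  have h1 : (3 * j) % 3 = 0 := by omega
  have h2 : (3 * j) / 3 = j := by omega
  simp [MF, ρ, h1, h2]

lemma MF1 (j : ℤ) : MF n b s (3 * j + 1) =
    {A n (b + (j : ZMod 2)), Sum.inr (s + 2 * (j : ZMod n) + 1),
      Sum.inr (s + 2 * (j : ZMod n) + 2)} := by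
  have h1 : (3 * j + 1) % 3 = 1 := by omega
  have h2 : (3 * j + 1) / 3 = j := by omega
  simp [MF, ρ, h1, h2]

lemma MF2 (j : ℤ) : MF n b s (3 * j + 2) =
    {A n (b + (j : ZMod 2)), Sum.inr (s + 2 * (j : ZMod n) + 2),
      Sum.inr (s + 2 * (j : ZMod n) + 3)} := by
  have h1 : (3 * j + 2) % 3 = 2 := by omega
  have h2 : (3 * j + 2) / 3 = j := by omega
  simp [MF, ρ, h1, h2]

lemma MF3 (j : ℤ) : MF n b s (3 * j + 3) =
    {A n (b + (j : ZMod 2) + 1), Sum.inr (s + 2 * (j : ZMod n) + 2),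
      Sum.inr (s + 2 * (j : ZMod n) + 3)} := by
  have h1 : (3 * j + 3) % 3 = 0 := by omega
  have h2 : (3 * j + 3) / 3 = j + 1 := by omega
  have h3 : ((j + 1 : ℤ) : ZMod n) = (j : ZMod n) + 1 := by push_cast; ring
  have h4 : ((j + 1 : ℤ) : ZMod 2) = (j : ZMod 2) + 1 := by push_cast; ring
  simp only [MF, ρ, h1, h2, h3, h4]
  norm_num
  ring_nf

lemma MH0 (j : ℤ) : MH n b s (3 * j) = Sum.inr (s + 2 * (j : ZMod n) + 1) := by
  have h1 : (3 * j) % 3 = 0 := by omega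
  have h2 : (3 * j) / 3 = j := by omega
  simp [MH, ρ, h1, h2]

lemma MH1 (j : ℤ) : MH n b s (3 * j + 1) = A n (b + (j : ZMod 2)) := by
  have h1 : (3 * j + 1) % 3 = 1 := by omega
  have h2 : (3 * j + 1) / 3 = j := by omega
  simp [MH, ρ, h1, h2]

lemma MH2 (j : ℤ) : MH n b s (3 * j + 2) = Sum.inr (s + 2 * (j : ZMod n) + 2) := by
  have h1 : (3 * j + 2) % 3 = 2 := by omega
  have h2 : (3 * j + 2) / 3 = j := by omega
  simp [MH, ρ, h1, h2]


lemma spoke_mem' (x : ZMod 2) (m : ZMod n) :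
    ({A n x, Sum.inr m} : Finset (Bool ⊕ ZMod n)) ∈ (BP n).edges := spoke_mem _ m

lemma face_mem' (x : ZMod 2) (m : ZMod n) :
    ({A n x, Sum.inr m, Sum.inr (m + 1)} : Finset (Bool ⊕ ZMod n)) ∈ (BP n).faces :=
  face_mem _ m

lemma zd01 (h4 : 4 ≤ n) (x : ZMod n) : x ≠ x + 1 := by
  have := zne (show (0 : ZMod n) ≠ 1 from (z10 h4).symm) x; simpa using this

lemma zd02 (h4 : 4 ≤ n) (x : ZMod n) : x ≠ x + 2 := by
  have := zne (show (0 : ZMod n) ≠ 2 from (z20 h4).symm) x; simpa using this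

lemma zd03 (h4 : 4 ≤ n) (x : ZMod n) : x ≠ x + 3 := by
  have := zne (show (0 : ZMod n) ≠ 3 from (z30 h4).symm) x; simpa using this

lemma zd12 (h4 : 4 ≤ n) (x : ZMod n) : x + 1 ≠ x + 2 :=
  zne (show (1 : ZMod n) ≠ 2 from (z21 h4).symm) x

lemma zd13 (h4 : 4 ≤ n) (x : ZMod n) : x + 1 ≠ x + 3 :=
  zne (show (1 : ZMod n) ≠ 3 from (z31 h4).symm) x

lemma zd23 (h4 : 4 ≤ n) (x : ZMod n) : x + 2 ≠ x + 3 :=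
  zne (show (2 : ZMod n) ≠ 3 from (z32 h4).symm) x

lemma two_mul_zmod2 (x : ZMod 2) : 2 * x = 0 := by revert x; decide

lemma cast_shift_n (q : ℤ) : ((q + 2 * (n : ℤ) : ℤ) : ZMod n) = ((q : ℤ) : ZMod n) := by
  push_cast [ZMod.natCast_self]
  ring

lemma cast_shift_two (q : ℤ) : ((q + 2 * (n : ℤ) : ℤ) : ZMod 2) = ((q : ℤ) : ZMod 2) := by
  push_cast
  linear_combination two_mul_zmod2 ((n : ℕ) : ZMod 2)

lemma ME_per (i : ℤ) : ME n b s (i + 6 * (n : ℤ)) = ME n b s i := by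
  have h1 : (i + 6 * (n : ℤ)) % 3 = i % 3 := by omega
  have h2 : (i + 6 * (n : ℤ)) / 3 = i / 3 + 2 * (n : ℤ) := by omega
  simp only [ME, ρ, h1, h2, cast_shift_n, cast_shift_two]

lemma MF_per (i : ℤ) : MF n b s (i + 6 * (n : ℤ)) = MF n b s i := by
  have h1 : (i + 6 * (n : ℤ)) % 3 = i % 3 := by omega
  have h2 : (i + 6 * (n : ℤ)) / 3 = i / 3 + 2 * (n : ℤ) := by omega
  simp only [MF, ρ, h1, h2, cast_shift_n, cast_shift_two]

lemma MH_per (i : ℤ) : MH n b s (i + 6 * (n : ℤ)) = MH n b s i := by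
  have h1 : (i + 6 * (n : ℤ)) % 3 = i % 3 := by omega
  have h2 : (i + 6 * (n : ℤ)) / 3 = i / 3 + 2 * (n : ℤ) := by omega
  simp only [MH, ρ, h1, h2, cast_shift_n, cast_shift_two]

/-- The model zigzag. -/
def Zm (n : ℕ) [NeZero n] (h4 : 4 ≤ n) (b : ZMod 2) (s : ZMod n) : Zigzag (BP n) where
  e := ME n b s
  f := MF n b s
  head := MH n b s
  e_mem := by
    intro i
    obtain ⟨j, hj⟩ : ∃ j, i = 3 * j ∨ i = 3 * j + 1 ∨ i = 3 * j + 2 := ⟨i / 3, by omega⟩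
    rcases hj with rfl | rfl | rfl
    · rw [ME0]; exact ring_mem h4 _
    · rw [ME1]; exact spoke_mem' _ _
    · rw [ME2]; exact spoke_mem' _ _
  f_mem := by
    intro i
    obtain ⟨j, hj⟩ : ∃ j, i = 3 * j ∨ i = 3 * j + 1 ∨ i = 3 * j + 2 := ⟨i / 3, by omega⟩
    rcases hj with rfl | rfl | rfl
    · rw [MF0]; exact face_mem' _ _
    · rw [MF1,
        (by ring : s + 2 * (j : ZMod n) + 2 = s + 2 * (j : ZMod n) + 1 + 1)]
      exact face_mem' _ _
    · rw [MF2,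
        (by ring : s + 2 * (j : ZMod n) + 3 = s + 2 * (j : ZMod n) + 2 + 1)]
      exact face_mem' _ _
  sub_left := by
    intro i
    obtain ⟨j, hj⟩ : ∃ j, i = 3 * j ∨ i = 3 * j + 1 ∨ i = 3 * j + 2 := ⟨i / 3, by omega⟩
    rcases hj with rfl | rfl | rfl
    · rw [ME0, MF0]
      intro w hw
      simp only [Finset.mem_insert, Finset.mem_singleton] at hw ⊢
      tauto
    · rw [ME1, MF1]
      intro w hw
      simp only [Finset.mem_insert, Finset.mem_singleton] at hw ⊢
      tauto
    · rw [ME2, MF2]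
      intro w hw
      simp only [Finset.mem_insert, Finset.mem_singleton] at hw ⊢
      tauto
  sub_right := by
    intro i
    obtain ⟨j, hj⟩ : ∃ j, i = 3 * j ∨ i = 3 * j + 1 ∨ i = 3 * j + 2 := ⟨i / 3, by omega⟩
    rcases hj with rfl | rfl | rfl
    · rw [ME1, MF0]
      intro w hw
      simp only [Finset.mem_insert, Finset.mem_singleton] at hw ⊢
      tauto
    · rw [(by ring : 3 * j + 1 + 1 = 3 * j + 2), ME2, MF1]
      intro w hw
      simp only [Finset.mem_insert, Finset.mem_singleton] at hw ⊢
      tauto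
    · rw [(by ring : 3 * j + 2 + 1 = 3 * j + 3), ME3, MF2]
      intro w hw
      simp only [Finset.mem_insert, Finset.mem_singleton] at hw ⊢
      tauto
  edges_ne := by
    intro i
    obtain ⟨j, hj⟩ : ∃ j, i = 3 * j ∨ i = 3 * j + 1 ∨ i = 3 * j + 2 := ⟨i / 3, by omega⟩
    rcases hj with rfl | rfl | rfl
    · rw [ME0, ME1]
      intro h
      have : A n (b + (j : ZMod 2)) ∈
          ({Sum.inr (s + 2 * (j : ZMod n)), Sum.inr (s + 2 * (j : ZMod n) + 1)} :
            Finset (Bool ⊕ ZMod n)) := h ▸ (by simp)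
      simp [A] at this
    · rw [(by ring : 3 * j + 1 + 1 = 3 * j + 2), ME1, ME2]
      intro h
      have : Sum.inr (s + 2 * (j : ZMod n) + 2) ∈
          ({A n (b + (j : ZMod 2)), Sum.inr (s + 2 * (j : ZMod n) + 1)} :
            Finset (Bool ⊕ ZMod n)) := h ▸ (by simp)
      simp only [Finset.mem_insert, Finset.mem_singleton, Sum.inr.injEq, A,
        reduceCtorEq, false_or] at this
      exact zd12 h4 _ this.symm
    · rw [(by ring : 3 * j + 2 + 1 = 3 * j + 3), ME2, ME3]
      intro h
      have : A n (b + (j : ZMod 2)) ∈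
          ({Sum.inr (s + 2 * (j : ZMod n) + 2), Sum.inr (s + 2 * (j : ZMod n) + 3)} :
            Finset (Bool ⊕ ZMod n)) := h ▸ (by simp)
      simp [A] at this
  faces_ne := by
    intro i
    obtain ⟨j, hj⟩ : ∃ j, i = 3 * j ∨ i = 3 * j + 1 ∨ i = 3 * j + 2 := ⟨i / 3, by omega⟩
    rcases hj with rfl | rfl | rfl
    · rw [MF0, MF1]
      intro h
      have : Sum.inr (s + 2 * (j : ZMod n) + 2) ∈
          ({A n (b + (j : ZMod 2)), Sum.inr (s + 2 * (j : ZMod n)),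
            Sum.inr (s + 2 * (j : ZMod n) + 1)} : Finset (Bool ⊕ ZMod n)) := h ▸ (by simp)
      simp only [Finset.mem_insert, Finset.mem_singleton, Sum.inr.injEq, A,
        reduceCtorEq, false_or] at this
      rcases this with h' | h'
      · exact zd02 h4 _ h'.symm
      · exact zd12 h4 _ h'.symm
    · rw [(by ring : 3 * j + 1 + 1 = 3 * j + 2), MF1, MF2]
      intro h
      have : Sum.inr (s + 2 * (j : ZMod n) + 3) ∈
          ({A n (b + (j : ZMod 2)), Sum.inr (s + 2 * (j : ZMod n) + 1),
            Sum.inr (s + 2 * (j : ZMod n) + 2)} : Finset (Bool ⊕ ZMod n)) := h ▸ (by simp)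
      simp only [Finset.mem_insert, Finset.mem_singleton, Sum.inr.injEq, A,
        reduceCtorEq, false_or] at this
      rcases this with h' | h'
      · exact zd13 h4 _ h'.symm
      · exact zd23 h4 _ h'.symm
    · rw [(by ring : 3 * j + 2 + 1 = 3 * j + 3), MF2, MF3]
      intro h
      have : A n (b + (j : ZMod 2)) ∈
          ({A n (b + (j : ZMod 2) + 1), Sum.inr (s + 2 * (j : ZMod n) + 2),
            Sum.inr (s + 2 * (j : ZMod n) + 3)} : Finset (Bool ⊕ ZMod n)) := h ▸ (by simp)
      simp only [Finset.mem_insert, Finset.mem_singleton, A, Sum.inl.injEq,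
        reduceCtorEq, or_false] at this
      exact A_succ_ne (n := n) _ (congrArg Sum.inl this)
  disj := by
    intro i
    obtain ⟨j, hj⟩ : ∃ j, i = 3 * j ∨ i = 3 * j + 1 ∨ i = 3 * j + 2 := ⟨i / 3, by omega⟩
    rcases hj with rfl | rfl | rfl
    · rw [ME0, ME2, Finset.disjoint_left]
      intro w hw hw'
      simp only [Finset.mem_insert, Finset.mem_singleton] at hw hw'
      rcases hw with rfl | rfl <;> rcases hw' with h' | h' <;>
        simp only [Sum.inr.injEq, A, reduceCtorEq] at h'
      · exact zd02 h4 _ h'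
      · exact zd12 h4 _ h'
    · rw [(by ring : 3 * j + 1 + 2 = 3 * j + 3), ME1, ME3, Finset.disjoint_left]
      intro w hw hw'
      simp only [Finset.mem_insert, Finset.mem_singleton] at hw hw'
      rcases hw with rfl | rfl <;> rcases hw' with h' | h' <;>
        simp only [Sum.inr.injEq, A, reduceCtorEq] at h'
      · exact zd12 h4 _ h'
      · exact zd13 h4 _ h'
    · rw [(by ring : 3 * j + 2 + 2 = 3 * j + 4), ME2, ME4, Finset.disjoint_left]
      intro w hw hw'
      simp only [Finset.mem_insert, Finset.mem_singleton] at hw hw'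
      rcases hw with rfl | rfl <;> rcases hw' with h' | h'
      · exact A_succ_ne _ h'
      · simp [A] at h'
      · simp [A] at h'
      · simp only [Sum.inr.injEq] at h'
        exact zd23 h4 _ h'
  inter_eq := by
    intro i
    obtain ⟨j, hj⟩ : ∃ j, i = 3 * j ∨ i = 3 * j + 1 ∨ i = 3 * j + 2 := ⟨i / 3, by omega⟩
    rcases hj with rfl | rfl | rfl
    · rw [ME0, ME1, MH0]
      rw [Finset.insert_inter_of_notMem, Finset.singleton_inter_of_mem (by simp)]
      simp only [Finset.mem_insert, Finset.mem_singleton, Sum.inr.injEq, A, reduceCtorEq,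
        false_or]
      exact fun h => zd01 h4 _ h
    · rw [(by ring : 3 * j + 1 + 1 = 3 * j + 2), ME1, ME2, MH1]
      rw [Finset.insert_inter_of_mem (by simp), Finset.singleton_inter_of_notMem]
      · rfl
      · simp only [Finset.mem_insert, Finset.mem_singleton, Sum.inr.injEq, A, reduceCtorEq,
          false_or]
        exact zd12 h4 _
    · rw [(by ring : 3 * j + 2 + 1 = 3 * j + 3), ME2, ME3, MH2]
      rw [Finset.insert_inter_of_notMem, Finset.singleton_inter_of_mem (by simp)]
      simp [A]
  exists_period := by
    refine ⟨6 * n, by have := Nat.pos_of_ne_zero (NeZero.ne n); omega, fun i => ?_⟩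
    have hc : ((6 * n : ℕ) : ℤ) = 6 * (n : ℤ) := by push_cast; ring
    rw [hc]
    exact ⟨ME_per b s i, MF_per b s i, MH_per b s i⟩

lemma nxt_zig' (h4 : 4 ≤ n) (W : Zigzag (BP n)) (i j l : ℤ) (hj : j = i + 1) (hl : l = i + 2) :
    Nxt n (W.e i) (W.e j) (W.e l) := by
  subst hj hl
  exact nxt_zig h4 W i

lemma ext_fwd (h4 : 4 ≤ n) (Z W : Zigzag (BP n)) (a c : ℤ) (h0 : W.e c = Z.e a)
    (h1 : W.e (c + 1) = Z.e (a + 1)) : ∀ i : ℤ, W.e (c + i) = Z.e (a + i) := by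
  suffices H : ∀ i : ℤ, W.e (c + i) = Z.e (a + i) ∧ W.e (c + i + 1) = Z.e (a + i + 1) by
    exact fun i => (H i).1
  intro i
  induction i using Int.induction_on with
  | zero => simpa using ⟨h0, h1⟩
  | succ m ih =>
    obtain ⟨p1, p2⟩ := ih
    constructor
    · rw [(by ring : c + ((m : ℤ) + 1) = c + m + 1), (by ring : a + ((m : ℤ) + 1) = a + m + 1)]
      exact p2
    · have nW := nxt_zig' h4 W (c + m) (c + m + 1) (c + ((m : ℤ) + 1) + 1) rfl (by ring)
      have nZ := nxt_zig' h4 Z (a + m) (a + m + 1) (a + ((m : ℤ) + 1) + 1) rfl (by ring)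
      rw [← p1, ← p2] at nZ
      exact nxt_unique h4 nW nZ
  | pred m ih =>
    obtain ⟨p1, p2⟩ := ih
    constructor
    · have nW := nxt_zig' h4 W (c + (-(m : ℤ) - 1)) (c + -(m : ℤ)) (c + -(m : ℤ) + 1)
        (by ring) (by ring)
      have nZ := nxt_zig' h4 Z (a + (-(m : ℤ) - 1)) (a + -(m : ℤ)) (a + -(m : ℤ) + 1)
        (by ring) (by ring)
      rw [← p1, ← p2] at nZ
      exact nxt_unique h4 (nxt_symm nW) (nxt_symm nZ)
    · rw [(by ring : c + (-(m : ℤ) - 1) + 1 = c + -(m : ℤ)),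
        (by ring : a + (-(m : ℤ) - 1) + 1 = a + -(m : ℤ))]
      exact p1

lemma ext_bwd (h4 : 4 ≤ n) (Z W : Zigzag (BP n)) (a c : ℤ) (h0 : W.e c = Z.e a)
    (h1 : W.e (c + 1) = Z.e (a - 1)) : ∀ i : ℤ, W.e (c + i) = Z.e (a - i) := by
  suffices H : ∀ i : ℤ, W.e (c + i) = Z.e (a - i) ∧ W.e (c + i + 1) = Z.e (a - i - 1) by
    exact fun i => (H i).1
  intro i
  induction i using Int.induction_on with
  | zero => simpa using ⟨h0, h1⟩
  | succ m ih =>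
    obtain ⟨p1, p2⟩ := ih
    constructor
    · rw [(by ring : c + ((m : ℤ) + 1) = c + m + 1), (by ring : a - ((m : ℤ) + 1) = a - m - 1)]
      exact p2
    · have nW := nxt_zig' h4 W (c + m) (c + m + 1) (c + ((m : ℤ) + 1) + 1) rfl (by ring)
      have nZ := nxt_symm (nxt_zig' h4 Z (a - ((m : ℤ) + 1) - 1) (a - m - 1) (a - m)
        (by ring) (by ring))
      rw [← p1, ← p2] at nZ
      exact nxt_unique h4 nW nZ
  | pred m ih =>
    obtain ⟨p1, p2⟩ := ih
    constructor
    · have nW := nxt_zig' h4 W (c + (-(m : ℤ) - 1)) (c + -(m : ℤ)) (c + -(m : ℤ) + 1)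
        (by ring) (by ring)
      have nZ := nxt_symm (nxt_zig' h4 Z (a - -(m : ℤ) - 1) (a - -(m : ℤ))
        (a - (-(m : ℤ) - 1)) (by ring) (by ring))
      rw [← p1, ← p2] at nZ
      exact nxt_unique h4 (nxt_symm nW) (nxt_symm nZ)
    · rw [(by ring : c + (-(m : ℤ) - 1) + 1 = c + -(m : ℤ)),
        (by ring : a - (-(m : ℤ) - 1) - 1 = a - -(m : ℤ))]
      exact p1

lemma equiv_of_pair_fwd (h4 : 4 ≤ n) {Z W : Zigzag (BP n)} (a : ℤ) (h0 : W.e 0 = Z.e a)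
    (h1 : W.e 1 = Z.e (a + 1)) : Z.Equiv W := by
  left
  refine ⟨a, fun i => ?_⟩
  have := ext_fwd h4 Z W a 0 h0 (by simpa using h1) i
  rw [zero_add] at this
  rw [this, add_comm]

lemma equiv_of_pair_bwd (h4 : 4 ≤ n) {Z W : Zigzag (BP n)} (a : ℤ) (h0 : W.e 0 = Z.e a)
    (h1 : W.e 1 = Z.e (a - 1)) : Z.Equiv W := by
  right
  refine ⟨a, fun i => ?_⟩
  have := ext_bwd h4 Z W a 0 h0 (by simpa using h1) i
  rwa [zero_add] at this

lemma Zm_e (h4 : 4 ≤ n) (i : ℤ) : (Zm n h4 b s).e i = ME n b s i := rfl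

lemma ZmE0' (h4 : 4 ≤ n) : (Zm n h4 b s).e 0 = {Sum.inr s, Sum.inr (s + 1)} := by
  have h := ME0 (n := n) b s 0
  norm_num at h
  rw [Zm_e, h]

lemma ZmE1' (h4 : 4 ≤ n) : (Zm n h4 b s).e 1 = {A n b, Sum.inr (s + 1)} := by
  have h := ME1 (n := n) b s 0
  norm_num at h
  rw [Zm_e, h]

lemma ZmE2' (h4 : 4 ≤ n) : (Zm n h4 b s).e 2 = {A n b, Sum.inr (s + 2)} := by
  have h := ME2 (n := n) b s 0
  norm_num at h
  rw [Zm_e, h]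

lemma ZmE3' (h4 : 4 ≤ n) : (Zm n h4 b s).e 3 = {Sum.inr (s + 2), Sum.inr (s + 3)} := by
  have h := ME3 (n := n) b s 0
  norm_num at h
  rw [Zm_e, h]

lemma ZmEm1' (h4 : 4 ≤ n) : (Zm n h4 b s).e (-1) = {A n (b - 1), Sum.inr s} := by
  have h := ME2 (n := n) b s (-1)
  norm_num at h
  rw [Zm_e, h, sub_eq_add_neg]

def β (t : Bool) : ZMod 2 := if t then 1 else 0

lemma Aβ (t : Bool) : A n (β t) = Sum.inl t := by
  cases t <;> rfl

lemma classify (h4 : 4 ≤ n) (W : Zigzag (BP n)) :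
    ∃ (b : ZMod 2) (s : ZMod n), (Zm n h4 b s).Equiv W := by
  have hface : W.e 0 ∪ W.e 1 ∈ (BP n).faces := by
    have := f_eq_union h4 W 0
    norm_num at this
    rw [← this]
    exact W.f_mem 0
  obtain ⟨t, m, hF⟩ := mem_faces_iff.1 hface
  have hne1 : (Sum.inl t : Bool ⊕ ZMod n) ≠ Sum.inr m := by simp
  have hne2 : (Sum.inl t : Bool ⊕ ZMod n) ≠ Sum.inr (m + 1) := by simp
  have hne3 : (Sum.inr m : Bool ⊕ ZMod n) ≠ Sum.inr (m + 1) :=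
    fun h => zd01 h4 m (Sum.inr.inj h)
  have hsub0 : W.e 0 ⊆ {Sum.inl t, Sum.inr m, Sum.inr (m + 1)} :=
    hF ▸ (Finset.subset_union_left.trans (le_of_eq rfl))
  have hsub1 : W.e 1 ⊆ {Sum.inl t, Sum.inr m, Sum.inr (m + 1)} :=
    hF ▸ (Finset.subset_union_right.trans (le_of_eq rfl))
  have hENE : W.e 0 ≠ W.e 1 := by
    have := W.edges_ne 0
    norm_num at this
    exact this
  have hc0 : (W.e 0).card = 2 := edge_card (W.e_mem 0)
  have hc1 : (W.e 1).card = 2 := edge_card (W.e_mem 1)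
  rcases two_subset_of_three hne1 hne2 hne3 hsub0 hc0 with h0 | h0 | h0 <;>
    rcases two_subset_of_three hne1 hne2 hne3 hsub1 hc1 with h1 | h1 | h1
  · exact absurd (h0.trans h1.symm) hENE
  -- e0 = {inl t, inr m}, e1 = {inl t, inr (m+1)} : case 4
  · refine ⟨β t, m - 1, equiv_of_pair_fwd h4 1 ?_ ?_⟩
    · rw [ZmE1' _ _ h4, Aβ, (by ring : m - 1 + 1 = m), h0]
    · rw [(by norm_num : (1 : ℤ) + 1 = 2), ZmE2' _ _ h4, Aβ,
        (by ring : m - 1 + 2 = m + 1), h1]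
  -- e0 = {inl t, inr m}, e1 = {inr m, inr (m+1)} : case 6
  · refine ⟨β t, m - 2, equiv_of_pair_fwd h4 2 ?_ ?_⟩
    · rw [ZmE2' _ _ h4, Aβ, (by ring : m - 2 + 2 = m), h0]
    · rw [(by norm_num : (2 : ℤ) + 1 = 3), ZmE3' _ _ h4,
        (by ring : m - 2 + 2 = m), (by ring : m - 2 + 3 = m + 1), h1]
  -- e0 = {inl t, inr (m+1)}, e1 = {inl t, inr m} : case 3
  · refine ⟨β t, m - 1, equiv_of_pair_bwd h4 2 ?_ ?_⟩
    · rw [ZmE2' _ _ h4, Aβ, (by ring : m - 1 + 2 = m + 1), h0]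
    · rw [(by norm_num : (2 : ℤ) - 1 = 1), ZmE1' _ _ h4, Aβ,
        (by ring : m - 1 + 1 = m), h1]
  · exact absurd (h0.trans h1.symm) hENE
  -- e0 = {inl t, inr (m+1)}, e1 = {inr m, inr (m+1)} : case 2
  · refine ⟨β t, m, equiv_of_pair_bwd h4 1 ?_ ?_⟩
    · rw [ZmE1' _ _ h4, Aβ, h0]
    · rw [(by norm_num : (1 : ℤ) - 1 = 0), ZmE0' _ _ h4, h1]
  -- e0 = {inr m, inr (m+1)}, e1 = {inl t, inr m} : case 5
  · refine ⟨β t + 1, m, equiv_of_pair_bwd h4 0 ?_ ?_⟩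
    · rw [ZmE0' _ _ h4, h0]
    · rw [(by norm_num : (0 : ℤ) - 1 = -1), ZmEm1' _ _ h4,
        (by ring : β t + 1 - 1 = β t), Aβ, h1]
  -- e0 = {inr m, inr (m+1)}, e1 = {inl t, inr (m+1)} : case 1
  · refine ⟨β t, m, equiv_of_pair_fwd h4 0 ?_ ?_⟩
    · rw [ZmE0' _ _ h4, h0]
    · rw [(by norm_num : (0 : ℤ) + 1 = 1), ZmE1' _ _ h4, Aβ, h1]
  · exact absurd (h0.trans h1.symm) hENE

lemma equiv_symm {Z W : Zigzag (BP n)} (h : Z.Equiv W) : W.Equiv Z := by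
  rcases h with ⟨t, h⟩ | ⟨t, h⟩
  · left
    refine ⟨-t, fun i => ?_⟩
    have := h (i - t)
    rw [(by ring : i - t + t = i)] at this
    rw [← this, (by ring : i + -t = i - t)]
  · right
    refine ⟨t, fun i => ?_⟩
    have := h (t - i)
    rw [(by ring : t - (t - i) = i)] at this
    exact this.symm

lemma equiv_trans {Z W X : Zigzag (BP n)} (h1 : Z.Equiv W) (h2 : W.Equiv X) : Z.Equiv X := by
  rcases h1 with ⟨t1, h1⟩ | ⟨t1, h1⟩ <;> rcases h2 with ⟨t2, h2⟩ | ⟨t2, h2⟩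
  · left
    exact ⟨t2 + t1, fun i => by rw [h2 i, h1 (i + t2), (by ring : i + t2 + t1 = i + (t2 + t1))]⟩
  · right
    exact ⟨t2 + t1, fun i => by rw [h2 i, h1 (t2 - i), (by ring : t2 - i + t1 = t2 + t1 - i)]⟩
  · right
    exact ⟨t1 - t2, fun i => by rw [h2 i, h1 (i + t2), (by ring : t1 - (i + t2) = t1 - t2 - i)]⟩
  · left
    exact ⟨t1 - t2, fun i => by rw [h2 i, h1 (t2 - i), (by ring : t1 - (t2 - i) = i + (t1 - t2))]⟩

lemma shift_e (h4 : 4 ≤ n) (j i : ℤ) :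
    (Zm n h4 (b + (j : ZMod 2)) (s + 2 * (j : ZMod n))).e i = (Zm n h4 b s).e (i + 3 * j) := by
  rw [Zm_e, Zm_e]
  obtain ⟨u, hu⟩ : ∃ u, i = 3 * u ∨ i = 3 * u + 1 ∨ i = 3 * u + 2 := ⟨i / 3, by omega⟩
  have c2 : ∀ q r : ℤ, ((q + r : ℤ) : ZMod 2) = (q : ZMod 2) + (r : ZMod 2) := by
    intro q r; push_cast; ring
  have cn : ∀ q r : ℤ, ((q + r : ℤ) : ZMod n) = (q : ZMod n) + (r : ZMod n) := by
    intro q r; push_cast; ring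
  rcases hu with rfl | rfl | rfl
  · rw [ME0, (by ring : 3 * u + 3 * j = 3 * (u + j)), ME0, cn]
    congr 2 <;> ring
  · rw [ME1, (by ring : 3 * u + 1 + 3 * j = 3 * (u + j) + 1), ME1, cn, c2]
    ring_nf
  · rw [ME2, (by ring : 3 * u + 2 + 3 * j = 3 * (u + j) + 2), ME2, cn, c2]
    ring_nf

lemma equiv_shift (h4 : 4 ≤ n) (j : ℤ) :
    (Zm n h4 b s).Equiv (Zm n h4 (b + (j : ZMod 2)) (s + 2 * (j : ZMod n))) :=
  Or.inl ⟨3 * j, fun i => shift_e b s h4 j i⟩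

lemma ring_ne_spoke (h4 : 4 ≤ n) (x : ZMod 2) (u v w : ZMod n) :
    ({Sum.inr u, Sum.inr v} : Finset (Bool ⊕ ZMod n)) ≠ {A n x, Sum.inr w} := by
  intro h
  have : A n x ∈ ({Sum.inr u, Sum.inr v} : Finset (Bool ⊕ ZMod n)) := h ▸ (by simp)
  simp [A] at this

lemma pair_inj {x y : ZMod 2} {u v : ZMod n}
    (h : ({A n x, Sum.inr u} : Finset (Bool ⊕ ZMod n)) = {A n y, Sum.inr v}) :
    x = y ∧ u = v := by
  constructor
  · have : A n x ∈ ({A n y, Sum.inr v} : Finset (Bool ⊕ ZMod n)) := h ▸ (by simp)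
    simp only [Finset.mem_insert, Finset.mem_singleton, A, reduceCtorEq, or_false,
      Sum.inl.injEq] at this
    exact A_inj (n := n) (congrArg Sum.inl this)
  · have : Sum.inr u ∈ ({A n y, Sum.inr v} : Finset (Bool ⊕ ZMod n)) := h ▸ (by simp)
    simp only [Finset.mem_insert, Finset.mem_singleton, A, reduceCtorEq, false_or,
      Sum.inr.injEq] at this
    exact this

lemma ring_inj (h4 : 4 ≤ n) {u v : ZMod n}
    (h : ({Sum.inr u, Sum.inr (u + 1)} : Finset (Bool ⊕ ZMod n)) = {Sum.inr v, Sum.inr (v + 1)}) :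
    u = v := by
  have h1 : Sum.inr u ∈ ({Sum.inr v, Sum.inr (v + 1)} : Finset (Bool ⊕ ZMod n)) := h ▸ (by simp)
  have h2 : Sum.inr (u + 1) ∈ ({Sum.inr v, Sum.inr (v + 1)} : Finset (Bool ⊕ ZMod n)) :=
    h ▸ (by simp)
  simp only [Finset.mem_insert, Finset.mem_singleton, Sum.inr.injEq] at h1 h2
  rcases h1 with h1 | h1
  · exact h1
  · rcases h2 with h2 | h2
    · exact absurd (by linear_combination h2 - h1 : (2 : ZMod n) = 0) (z20 h4)
    · exact absurd (by linear_combination h2 - h1 : (1 : ZMod n) = 0) (z10 h4)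

lemma models_equiv_imp (h4 : 4 ≤ n) {b b' : ZMod 2} {s s' : ZMod n}
    (h : (Zm n h4 b s).Equiv (Zm n h4 b' s')) :
    ∃ q : ℤ, s' = s + 2 * (q : ZMod n) ∧ b' = b + (q : ZMod 2) := by
  rcases h with ⟨t, h⟩ | ⟨t, h⟩
  · obtain ⟨u, hu⟩ : ∃ u, t = 3 * u ∨ t = 3 * u + 1 ∨ t = 3 * u + 2 := ⟨t / 3, by omega⟩
    rcases hu with rfl | rfl | rfl
    · refine ⟨u, ?_, ?_⟩
      · have h0 := h 0
        rw [ZmE0' _ _ h4, (by ring : (0 : ℤ) + 3 * u = 3 * u), Zm_e, ME0] at h0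
        have := ring_inj h4 h0
        rw [this]
      · have h1 := h 1
        rw [ZmE1' _ _ h4, (by ring : (1 : ℤ) + 3 * u = 3 * u + 1), Zm_e, ME1] at h1
        exact (pair_inj h1).1
    · exfalso
      have h0 := h 0
      rw [ZmE0' _ _ h4, (by ring : (0 : ℤ) + (3 * u + 1) = 3 * u + 1), Zm_e, ME1] at h0
      exact ring_ne_spoke h4 _ _ _ _ h0
    · exfalso
      have h0 := h 0
      rw [ZmE0' _ _ h4, (by ring : (0 : ℤ) + (3 * u + 2) = 3 * u + 2), Zm_e, ME2] at h0
      exact ring_ne_spoke h4 _ _ _ _ h0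
  · exfalso
    obtain ⟨u, hu⟩ : ∃ u, t = 3 * u ∨ t = 3 * u + 1 ∨ t = 3 * u + 2 := ⟨t / 3, by omega⟩
    rcases hu with rfl | rfl | rfl
    · have h0 := h 0
      rw [ZmE0' _ _ h4, (by ring : 3 * u - 0 = 3 * u), Zm_e, ME0] at h0
      have hs := ring_inj h4 h0
      have h1 := h 1
      rw [ZmE1' _ _ h4, (by ring : 3 * u - 1 = 3 * (u - 1) + 2), Zm_e, ME2] at h1
      have := (pair_inj h1).2
      rw [hs] at this
      have : (1 : ZMod n) = 0 := by
        have hc : ((u - 1 : ℤ) : ZMod n) = (u : ZMod n) - 1 := by push_cast; ring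
        rw [hc] at this
        linear_combination this
      exact z10 h4 this
    · have h0 := h 0
      rw [ZmE0' _ _ h4, (by ring : 3 * u + 1 - 0 = 3 * u + 1), Zm_e, ME1] at h0
      exact ring_ne_spoke h4 _ _ _ _ h0
    · have h0 := h 0
      rw [ZmE0' _ _ h4, (by ring : 3 * u + 2 - 0 = 3 * u + 2), Zm_e, ME2] at h0
      exact ring_ne_spoke h4 _ _ _ _ h0

lemma length_eq_of_equiv {Z W : Zigzag (BP n)} (h : Z.Equiv W) : W.length = Z.length := by
  unfold Zigzag.length
  congr 1
  ext m
  simp only [Set.mem_setOf_eq, and_congr_right_iff]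
  intro _
  rcases h with ⟨t, h⟩ | ⟨t, h⟩
  · constructor
    · intro hw i
      have := hw (i - t)
      rw [h (i - t + m), h (i - t), (by ring : i - t + (m : ℤ) + t = i + m),
        (by ring : i - t + t = i)] at this
      exact this
    · intro hz i
      rw [h (i + m), h i]
      have := hz (i + t)
      rwa [(by ring : i + t + (m : ℤ) = i + m + t)] at this
  · constructor
    · intro hw i
      have := hw (t - i - m)
      rw [h (t - i - m + m), h (t - i - m), (by ring : t - (t - i - (m : ℤ) + m) = i),
        (by ring : t - (t - i - (m : ℤ)) = i + m)] at this
      exact this.symm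
    · intro hz i
      rw [h (i + m), h i]
      have := hz (t - i - m)
      rw [(by ring : t - i - (m : ℤ) + m = t - i)] at this
      rw [(by ring : t - (i + (m : ℤ)) = t - i - m)]
      exact this.symm

lemma Zm_periodic (h4 : 4 ≤ n) (k : ℕ) (hnk : n = 2 * k) (hk : Even k) (i : ℤ) :
    (Zm n h4 b s).e (i + (3 * k : ℕ)) = (Zm n h4 b s).e i := by
  obtain ⟨kk, hkk⟩ := hk
  have hkn : 2 * ((k : ℕ) : ZMod n) = 0 := by
    have h0 : ((2 * k : ℕ) : ZMod n) = 0 := by rw [← hnk]; exact ZMod.natCast_self n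
    push_cast at h0
    linear_combination h0
  have hk2 : ((k : ℕ) : ZMod 2) = 0 :=
    (ZMod.natCast_eq_zero_iff k 2).2 ⟨kk, by omega⟩
  rw [Zm_e, Zm_e]
  have hc : ((3 * k : ℕ) : ℤ) = 3 * (k : ℤ) := by push_cast; ring
  rw [hc]
  have h1 : (i + 3 * (k : ℤ)) % 3 = i % 3 := by omega
  have h2 : (i + 3 * (k : ℤ)) / 3 = i / 3 + (k : ℤ) := by omega
  have cn : ∀ q : ℤ, s + 2 * (((q + (k : ℤ) : ℤ)) : ZMod n) = s + 2 * ((q : ℤ) : ZMod n) := by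
    intro q
    push_cast
    linear_combination hkn
  have c2 : ∀ q : ℤ, b + (((q + (k : ℤ) : ℤ)) : ZMod 2) = b + ((q : ℤ) : ZMod 2) := by
    intro q
    push_cast [hk2]
    ring
  simp only [ME, ρ, h1, h2, cn, c2]

lemma length_Zm (h4 : 4 ≤ n) (k : ℕ) (hnk : n = 2 * k) (hk : Even k) (hk2 : 2 ≤ k) :
    (Zm n h4 b s).length = 3 * k := by
  unfold Zigzag.length
  have hmem : 3 * k ∈ {m : ℕ | 0 < m ∧ ∀ i : ℤ, (Zm n h4 b s).e (i + (m : ℕ)) =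
      (Zm n h4 b s).e i} := ⟨by omega, Zm_periodic b s h4 k hnk hk⟩
  have hlb : ∀ m ∈ {m : ℕ | 0 < m ∧ ∀ i : ℤ, (Zm n h4 b s).e (i + (m : ℕ)) =
      (Zm n h4 b s).e i}, 3 * k ≤ m := by
    rintro m ⟨hm0, hm⟩
    by_contra hlt
    push_neg at hlt
    have h0 := hm 0
    rw [zero_add, ZmE0' _ _ h4] at h0
    obtain ⟨u, hu⟩ : ∃ u : ℕ, m = 3 * u ∨ m = 3 * u + 1 ∨ m = 3 * u + 2 := ⟨m / 3, by omega⟩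
    rcases hu with h | h | h
    · have hcast : ((m : ℕ) : ℤ) = 3 * (u : ℤ) := by omega
      rw [Zm_e, hcast, ME0] at h0
      have hs := ring_inj h4 h0
      have hq0 : ((2 * (u : ℕ) : ℤ) : ZMod n) = 0 := by
        push_cast at hs ⊢
        linear_combination hs
      have hdvd := (ZMod.intCast_zmod_eq_zero_iff_dvd _ n).1 hq0
      have hle := Int.le_of_dvd (by omega : (0 : ℤ) < 2 * (u : ℕ)) hdvd
      omega
    · have hcast : ((m : ℕ) : ℤ) = 3 * (u : ℤ) + 1 := by omega
      rw [Zm_e, hcast, ME1] at h0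
      exact ring_ne_spoke h4 _ _ _ _ h0.symm
    · have hcast : ((m : ℕ) : ℤ) = 3 * (u : ℤ) + 2 := by omega
      rw [Zm_e, hcast, ME2] at h0
      exact ring_ne_spoke h4 _ _ _ _ h0.symm
  exact le_antisymm (Nat.sInf_le hmem) (hlb _ (Nat.sInf_mem ⟨_, hmem⟩))

lemma rep_not_equiv (h4 : 4 ≤ n) (k : ℕ) (hnk : n = 2 * k) (hk : Even k) (hk2 : 2 ≤ k)
    {b b' : ZMod 2} {c c' : ℕ} (hc : c < 2) (hc' : c' < 2) (hne : ¬ (b = b' ∧ c = c')) :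
    ¬ (Zm n h4 b (c : ZMod n)).Equiv (Zm n h4 b' (c' : ZMod n)) := by
  intro h
  obtain ⟨q, hs, hb⟩ := models_equiv_imp h4 h
  obtain ⟨kk, hkk⟩ := hk
  by_cases hcc : c = c'
  · subst hcc
    have hq0 : ((2 * q : ℤ) : ZMod n) = 0 := by
      push_cast
      linear_combination -hs
    obtain ⟨c0, hc0⟩ := (ZMod.intCast_zmod_eq_zero_iff_dvd _ n).1 hq0
    have hn : (n : ℤ) = 2 * ((kk : ℤ) + kk) := by omega
    have h2' : (2 : ℤ) * q = 2 * (2 * ((kk : ℤ) * c0)) := by rw [hc0, hn]; ring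
    have h2q : (2 : ℤ) ∣ q := ⟨_, mul_left_cancel₀ (by norm_num : (2 : ℤ) ≠ 0) h2'⟩
    have hq2 : ((q : ℤ) : ZMod 2) = 0 := by
      rw [ZMod.intCast_zmod_eq_zero_iff_dvd]
      exact_mod_cast h2q
    rw [hq2, add_zero] at hb
    exact hne ⟨hb.symm, rfl⟩
  · have hq0 : (((c' : ℤ) - (c : ℤ) - 2 * q : ℤ) : ZMod n) = 0 := by
      push_cast
      linear_combination hs
    obtain ⟨c0, hc0⟩ := (ZMod.intCast_zmod_eq_zero_iff_dvd _ n).1 hq0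
    have hn : (n : ℤ) = 2 * ((kk : ℤ) + kk) := by omega
    obtain ⟨X, hX⟩ : ∃ X : ℤ, (c' : ℤ) - (c : ℤ) = 2 * X :=
      ⟨((kk : ℤ) + kk) * c0 + q, by rw [hn] at hc0; linear_combination hc0⟩
    omega

lemma s_decomp (s : ZMod n) :
    ∃ (j : ℤ) (c : ℕ), c < 2 ∧ s = (c : ZMod n) + 2 * ((j : ℤ) : ZMod n) := by
  refine ⟨((s.val / 2 : ℕ) : ℤ), s.val % 2, Nat.mod_lt _ (by norm_num), ?_⟩
  have hval : ((s.val : ℕ) : ZMod n) = s := ZMod.natCast_zmod_val s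
  have hsplit : s.val = s.val % 2 + 2 * (s.val / 2) := by omega
  have hb : ((((s.val : ℤ)) / 2 : ℤ) : ZMod n) = ((s.val / 2 : ℕ) : ZMod n) := by
    rw [show ((s.val : ℤ)) / 2 = ((s.val / 2 : ℕ) : ℤ) from by omega, Int.cast_natCast]
  conv_lhs => rw [← hval, hsplit]
  push_cast
  rw [hb]

lemma zmod2_cases (x : ZMod 2) : x = 0 ∨ x = 1 := by revert x; decide

end BPAux

open BPAux in
/-- For the `n`-gonal bipyramid `BP n` with `n = 2k` and `k`
even, there are exactly four zigzags up to reversal, each of length `3n/2`. -/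
theorem stmt5 (n k : ℕ) [NeZero n] (hnk : n = 2 * k) (hk : Even k) (h2 : 2 ≤ k) :
    (∃ Z₁ Z₂ Z₃ Z₄ : (BP n).Zigzag,
      ¬ Z₁.Equiv Z₂ ∧ ¬ Z₁.Equiv Z₃ ∧ ¬ Z₁.Equiv Z₄ ∧
      ¬ Z₂.Equiv Z₃ ∧ ¬ Z₂.Equiv Z₄ ∧ ¬ Z₃.Equiv Z₄ ∧
      ∀ W : (BP n).Zigzag, Z₁.Equiv W ∨ Z₂.Equiv W ∨ Z₃.Equiv W ∨ Z₄.Equiv W) ∧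
    ∀ W : (BP n).Zigzag, W.length = 3 * k := by
  have h4 : 4 ≤ n := by omega
  refine ⟨⟨Zm n h4 0 0, Zm n h4 1 0, Zm n h4 0 1, Zm n h4 1 1,
    ?_, ?_, ?_, ?_, ?_, ?_, ?_⟩, ?_⟩
  · have := rep_not_equiv h4 k hnk hk h2 (b := 0) (b' := 1) (c := 0) (c' := 0)
      (by omega) (by omega) (by decide)
    simpa using this
  · have := rep_not_equiv h4 k hnk hk h2 (b := 0) (b' := 0) (c := 0) (c' := 1)
      (by omega) (by omega) (by decide)
    simpa using this
  · have := rep_not_equiv h4 k hnk hk h2 (b := 0) (b' := 1) (c := 0) (c' := 1)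
      (by omega) (by omega) (by decide)
    simpa using this
  · have := rep_not_equiv h4 k hnk hk h2 (b := 1) (b' := 0) (c := 0) (c' := 1)
      (by omega) (by omega) (by decide)
    simpa using this
  · have := rep_not_equiv h4 k hnk hk h2 (b := 1) (b' := 1) (c := 0) (c' := 1)
      (by omega) (by omega) (by decide)
    simpa using this
  · have := rep_not_equiv h4 k hnk hk h2 (b := 0) (b' := 1) (c := 1) (c' := 1)
      (by omega) (by omega) (by decide)
    simpa using this
  · intro W
    obtain ⟨b, s, hbs⟩ := classify h4 W
    obtain ⟨j, c, hc, rfl⟩ := s_decomp s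
    have hshift := equiv_shift (b - (j : ZMod 2)) ((c : ℕ) : ZMod n) h4 j
    rw [(by ring : b - (j : ZMod 2) + (j : ZMod 2) = b)] at hshift
    have hW := equiv_trans hshift hbs
    rcases zmod2_cases (b - (j : ZMod 2)) with hb0 | hb0 <;> rw [hb0] at hW <;>
      rcases (by omega : c = 0 ∨ c = 1) with rfl | rfl
    · exact Or.inl (by simpa using hW)
    · exact Or.inr (Or.inr (Or.inl (by simpa using hW)))
    · exact Or.inr (Or.inl (by simpa using hW))
    · exact Or.inr (Or.inr (Or.inr (by simpa using hW)))
  · intro W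
    obtain ⟨b, s, hbs⟩ := classify h4 W
    rw [length_eq_of_equiv hbs, length_Zm b s h4 k hnk hk h2]
end

section
/- Given a fixed z-orientation of a triangulation, every face satisfies exactly one of: (I) it has exactly two edges of type I and one edge of type II, or (II) all three of its edges are of type II and their directions form a directed 3-cycle around the face. -/
open Finset
open scoped Classical

section Aux

lemma emodCongr {a b n : ℤ} (h : n ∣ a - b) : a % n = b % n :=
  ((Int.modEq_iff_dvd.mpr h : Int.ModEq n b a).symm : Int.ModEq n a b)

lemma even_card_invol {α : Type*} [DecidableEq α] :
    ∀ (m : ℕ) (s : Finset α) (g : α → α), s.card = m → (∀ x ∈ s, g x ∈ s) →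
      (∀ x ∈ s, g (g x) = x) → (∀ x ∈ s, g x ≠ x) → Even s.card := by
  intro m
  induction m using Nat.strong_induction_on with
  | _ m ih =>
    intro s g hm hmem hinv hne
    rcases s.eq_empty_or_nonempty with rfl | ⟨x, hx⟩
    · simp
    · have hgx : g x ∈ s := hmem x hx
      have hxgx : g x ≠ x := hne x hx
      set t := s \ {x, g x} with ht
      have htcard : t.card = s.card - 2 := by
        rw [ht, Finset.card_sdiff_of_subset (by intro v hv; simp at hv; rcases hv with rfl|rfl <;> assumption)]
        simp [Finset.card_pair (Ne.symm hxgx)]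
      have hts : t ⊆ s := Finset.sdiff_subset
      have h2 : 2 ≤ s.card := by
        have hss : ({x, g x} : Finset α) ⊆ s := by
          intro v hv; simp at hv; rcases hv with rfl|rfl <;> assumption
        calc 2 = ({x, g x} : Finset α).card := (Finset.card_pair (Ne.symm hxgx)).symm
        _ ≤ s.card := Finset.card_le_card hss
      have hmem' : ∀ v ∈ t, g v ∈ t := by
        intro v hv
        rw [ht, Finset.mem_sdiff] at hv ⊢
        obtain ⟨hvs, hvn⟩ := hv
        simp only [Finset.mem_insert, Finset.mem_singleton] at hvn ⊢
        refine ⟨hmem v hvs, ?_⟩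
        push_neg at hvn ⊢
        constructor
        · intro hgvx; apply hvn.2; rw [← hinv v hvs, hgvx]
        · intro hgvgx; apply hvn.1; rw [← hinv v hvs, hgvgx, hinv x hx]
      have hinv' : ∀ v ∈ t, g (g v) = v := fun v hv => hinv v (hts hv)
      have hne' : ∀ v ∈ t, g v ≠ v := fun v hv => hne v (hts hv)
      have hev : Even t.card := ih (m - 2) (by omega) t g (by omega) hmem' hinv' hne'
      rw [htcard] at hev
      obtain ⟨k, hk⟩ := hev
      exact ⟨k + 1, by omega⟩

set_option maxRecDepth 4000 in
lemma list_sum_map_get {α : Type*} (l : List α) (g : α → ℕ) :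
    (l.map g).sum = ∑ z : Fin l.length, g (l.get z) := by
  induction l with
  | nil => simp
  | cons a t ih =>
    rw [List.map_cons, List.sum_cons, ih]
    rw [show (∑ z : Fin (a :: t).length, g ((a :: t).get z))
      = ∑ z : Fin (t.length + 1), g ((a :: t).get z) from rfl, Fin.sum_univ_succ]
    rfl

namespace Triangulation

variable {V : Type} [DecidableEq V] {T : Triangulation V}

/-- direction (u,v) agrees with the cyclic orientation x → y → z → x. -/
def Fwd (x y z u v : V) : Prop :=
  (u = x ∧ v = y) ∨ (u = y ∧ v = z) ∨ (u = z ∧ v = x)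

lemma fwd_aux {x y z u h w : V} (hxy : x ≠ y) (hyz : y ≠ z) (hxz : x ≠ z)
    (huh : u ≠ h) (hhw : h ≠ w) (huw : u ≠ w)
    (hu : u = x ∨ u = y ∨ u = z) (hh : h = x ∨ h = y ∨ h = z) (hw : w = x ∨ w = y ∨ w = z) :
    (Fwd x y z u h ↔ Fwd x y z h w) := by
  unfold Fwd
  rcases hu with rfl|rfl|rfl <;> rcases hh with rfl|rfl|rfl <;> rcases hw with rfl|rfl|rfl <;>
    first | (exact absurd rfl huh) | (exact absurd rfl hhw) | (exact absurd rfl huw) |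
      (constructor <;> intro <;> tauto)

lemma pair_cases {u h x y : V} (huh : u ≠ h) (hp : ({u, h} : Finset V) = {x, y}) :
    (u = x ∧ h = y) ∨ (u = y ∧ h = x) := by
  have hu : u ∈ ({x, y} : Finset V) := hp ▸ Finset.mem_insert_self u {h}
  have hh : h ∈ ({x, y} : Finset V) := by rw [← hp]; simp
  clear hp
  simp only [Finset.mem_insert, Finset.mem_singleton] at hu hh
  rcases hu with rfl|rfl <;> rcases hh with rfl|rfl <;> tauto

lemma face_eq_or (hT : T.IsProper) {p g₁ g₂ g₃ : Finset V} (hp : p ∈ T.edges)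
    (h1 : g₁ ∈ T.faces) (h2 : g₂ ∈ T.faces) (h3 : g₃ ∈ T.faces)
    (hp1 : p ⊆ g₁) (hp2 : p ⊆ g₂) (hp3 : p ⊆ g₃) (hne : g₁ ≠ g₂) :
    g₃ = g₁ ∨ g₃ = g₂ := by
  have hc := hT.2.1 p hp
  have hsub : ({g₁, g₂} : Finset (Finset V)) ⊆ T.faces.filter fun f => p ⊆ f := by
    intro g hg
    simp only [Finset.mem_insert, Finset.mem_singleton] at hg
    rcases hg with rfl|rfl <;> rw [Finset.mem_filter] <;> exact ⟨by assumption, by assumption⟩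
  have heq : ({g₁, g₂} : Finset (Finset V)) = T.faces.filter fun f => p ⊆ f :=
    Finset.eq_of_subset_of_card_le hsub (by rw [hc, Finset.card_pair hne])
  have hg3 : g₃ ∈ ({g₁, g₂} : Finset (Finset V)) := by
    rw [heq, Finset.mem_filter]; exact ⟨h3, hp3⟩
  simpa using hg3

namespace Zigzag

variable (Z : Zigzag T)

lemma card_e (i : ℤ) : (Z.e i).card = 2 := by
  obtain ⟨g, hg, h⟩ := Finset.mem_biUnion.mp (Z.e_mem i)
  exact (Finset.mem_powersetCard.mp h).2

lemma head_mem_left (i : ℤ) : Z.head i ∈ Z.e i := by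
  have h : Z.head i ∈ Z.e i ∩ Z.e (i + 1) := by
    rw [Z.inter_eq i]; exact Finset.mem_singleton_self _
  exact (Finset.mem_inter.mp h).1

lemma head_mem_right (i : ℤ) : Z.head i ∈ Z.e (i + 1) := by
  have h : Z.head i ∈ Z.e i ∩ Z.e (i + 1) := by
    rw [Z.inter_eq i]; exact Finset.mem_singleton_self _
  exact (Finset.mem_inter.mp h).2

lemma head_prev_mem (i : ℤ) : Z.head (i - 1) ∈ Z.e i := by
  have h := Z.head_mem_right (i - 1)
  rwa [show i - 1 + 1 = i by ring] at h

lemma head_ne (i : ℤ) : Z.head (i - 1) ≠ Z.head i := by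
  intro h
  have h1 : Z.head i ∈ Z.e (i + 1) := Z.head_mem_right i
  have h2 : Z.head (i - 1) ∈ Z.e (i - 1) := Z.head_mem_left (i - 1)
  have hd := Z.disj (i - 1)
  rw [show i - 1 + 2 = i + 1 by ring] at hd
  rw [h] at h2
  exact (Finset.disjoint_left.mp hd h2) h1

lemma e_eq_pair (i : ℤ) : Z.e i = {Z.head (i - 1), Z.head i} := by
  have hsub : ({Z.head (i - 1), Z.head i} : Finset V) ⊆ Z.e i := by
    intro v hv
    simp only [Finset.mem_insert, Finset.mem_singleton] at hv
    rcases hv with rfl|rfl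
    · exact Z.head_prev_mem i
    · exact Z.head_mem_left i
  exact (Finset.eq_of_subset_of_card_le hsub
    (by rw [Z.card_e, Finset.card_pair (Z.head_ne i)])).symm

lemma period_spec : 0 < Z.length ∧ ∀ i : ℤ, Z.e (i + (Z.length : ℤ)) = Z.e i := by
  have hne : {n : ℕ | 0 < n ∧ ∀ i : ℤ, Z.e (i + (n : ℤ)) = Z.e i}.Nonempty := by
    obtain ⟨n, hn1, hn2⟩ := Z.exists_period
    exact ⟨n, hn1, fun i => (hn2 i).1⟩
  exact Nat.sInf_mem hne

lemma e_shift : ∀ (k i : ℤ), Z.e (i + k * (Z.length : ℤ)) = Z.e i := by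
  intro k
  induction k using Int.induction_on with
  | zero => simp
  | succ n ih =>
    intro i
    have h1 := Z.period_spec.2 (i + (n : ℤ) * (Z.length : ℤ))
    rw [show i + ((n : ℤ) + 1) * (Z.length : ℤ) = i + (n : ℤ) * (Z.length : ℤ) + (Z.length : ℤ)
      by ring, h1, ih i]
  | pred n ih =>
    intro i
    have h1 := Z.period_spec.2 (i + (-(n : ℤ) - 1) * (Z.length : ℤ))
    rw [show i + (-(n : ℤ) - 1) * (Z.length : ℤ) + (Z.length : ℤ)
      = i + (-(n : ℤ)) * (Z.length : ℤ) by ring] at h1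
    rw [← h1]
    exact ih i

lemma e_congr {i j : ℤ} (h : (Z.length : ℤ) ∣ j - i) : Z.e j = Z.e i := by
  obtain ⟨k, hk⟩ := h
  rw [show j = i + k * (Z.length : ℤ) by linear_combination hk]
  exact Z.e_shift k i

lemma head_congr {i j : ℤ} (h : (Z.length : ℤ) ∣ j - i) : Z.head j = Z.head i := by
  have h2 : (Z.length : ℤ) ∣ (j + 1) - (i + 1) := by
    rwa [show (j + 1) - (i + 1) = j - i by ring]
  have hs : ({Z.head j} : Finset V) = {Z.head i} := by
    rw [← Z.inter_eq j, ← Z.inter_eq i, Z.e_congr h, Z.e_congr h2]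
  exact Finset.singleton_injective hs

lemma dir_congr {i j : ℤ} (h : (Z.length : ℤ) ∣ j - i) : Z.dir j = Z.dir i := by
  have h2 : (Z.length : ℤ) ∣ (j - 1) - (i - 1) := by
    rwa [show (j - 1) - (i - 1) = j - i by ring]
  show (Z.head (j - 1), Z.head j) = (Z.head (i - 1), Z.head i)
  rw [Z.head_congr h, Z.head_congr h2]

lemma f_eq_union (hT : T.IsProper) (i : ℤ) : Z.f i = Z.e i ∪ Z.e (i + 1) := by
  have hsub : Z.e i ∪ Z.e (i + 1) ⊆ Z.f i := Finset.union_subset (Z.sub_left i) (Z.sub_right i)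
  have hcf : (Z.f i).card = 3 := hT.1 _ (Z.f_mem i)
  have hcu : (Z.e i ∪ Z.e (i + 1)).card = 3 := by
    have hui := Finset.card_union_add_card_inter (Z.e i) (Z.e (i + 1))
    rw [Z.inter_eq i, Z.card_e, Z.card_e, Finset.card_singleton] at hui
    omega
  exact (Finset.eq_of_subset_of_card_le hsub (by omega)).symm

lemma f_congr (hT : T.IsProper) {i j : ℤ} (h : (Z.length : ℤ) ∣ j - i) : Z.f j = Z.f i := by
  have h2 : (Z.length : ℤ) ∣ (j + 1) - (i + 1) := by
    rwa [show (j + 1) - (i + 1) = j - i by ring]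
  rw [Z.f_eq_union hT j, Z.f_eq_union hT i, Z.e_congr h, Z.e_congr h2]

lemma corner (hT : T.IsProper) (i : ℤ) {x y z : V}
    (hxy : x ≠ y) (hyz : y ≠ z) (hxz : x ≠ z) (hfi : Z.f i = {x, y, z}) :
    Fwd x y z (Z.head (i - 1)) (Z.head i) ↔ Fwd x y z (Z.head i) (Z.head (i + 1)) := by
  have hu : Z.head (i - 1) ∈ Z.f i := Z.sub_left i (Z.head_prev_mem i)
  have hh : Z.head i ∈ Z.f i := Z.sub_left i (Z.head_mem_left i)
  have hw : Z.head (i + 1) ∈ Z.f i := Z.sub_right i (Z.head_mem_left (i + 1))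
  have huh : Z.head (i - 1) ≠ Z.head i := Z.head_ne i
  have hhw : Z.head i ≠ Z.head (i + 1) := by
    have h := Z.head_ne (i + 1); rwa [show i + 1 - 1 = i by ring] at h
  have huw : Z.head (i - 1) ≠ Z.head (i + 1) := by
    intro hEq
    have h3 : (Z.f i).card = 3 := hT.1 _ (Z.f_mem i)
    have he2 : Z.e (i + 1) = {Z.head i, Z.head (i - 1)} := by
      have h4 := Z.e_eq_pair (i + 1)
      rw [show i + 1 - 1 = i by ring, ← hEq] at h4
      exact h4
    have hun : Z.f i = ({Z.head (i - 1), Z.head i} : Finset V) := by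
      rw [Z.f_eq_union hT i, Z.e_eq_pair i, he2]
      ext v; simp; tauto
    rw [hun, Finset.card_pair huh] at h3
    omega
  rw [hfi] at hu hh hw
  simp only [Finset.mem_insert, Finset.mem_singleton] at hu hh hw
  exact fwd_aux hxy hyz hxz huh hhw huw hu hh hw

end Zigzag

end Triangulation

end Aux
namespace Triangulation

variable {V : Type} [DecidableEq V] {T : Triangulation V}

namespace ZOrientation

variable (τ : T.ZOrientation)

/-- Membership in the coerced range. -/
lemma mem_coe_range (n : ℕ) (j : ℤ) :
    (j ∈ (do let a ← Finset.range n; pure ((a : ℤ)) : Finset ℤ)) ↔ 0 ≤ j ∧ j < n := by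
  simp only [Finset.bind_def, Finset.mem_sup, Finset.mem_range, Finset.pure_def,
    Finset.mem_singleton]
  constructor
  · rintro ⟨a, ha, rfl⟩
    constructor <;> [positivity; exact_mod_cast ha]
  · rintro ⟨h0, hlt⟩
    exact ⟨j.toNat, by omega, by omega⟩

/-- The occurrences of the edge `p` in a fundamental window of each zigzag. -/
noncomputable def occ (p : Finset V) : Finset (Fin τ.zigzags.length × ℤ) :=
  Finset.univ.biUnion fun z =>
    ((Finset.range (τ.zigzags.get z).length).filter
      fun i => (τ.zigzags.get z).e (i : ℤ) = p).image fun i => ((z, i) : Fin τ.zigzags.length × ℤ)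

lemma mem_occ {p : Finset V} {s : Fin τ.zigzags.length × ℤ} :
    s ∈ τ.occ p ↔ 0 ≤ s.2 ∧ s.2 < ((τ.zigzags.get s.1).length : ℤ) ∧
      (τ.zigzags.get s.1).e s.2 = p := by
  obtain ⟨z, i⟩ := s
  constructor
  · intro hsmem
    obtain ⟨z', -, him⟩ := Finset.mem_biUnion.mp hsmem
    obtain ⟨i', hi', heq⟩ := Finset.mem_image.mp him
    obtain ⟨hrange, he⟩ := Finset.mem_filter.mp hi'
    rw [mem_coe_range] at hrange
    injection heq with h1 h2
    subst h1; subst h2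
    exact ⟨hrange.1, hrange.2, he⟩
  · rintro ⟨h0, hlt, he⟩
    exact Finset.mem_biUnion.mpr ⟨z, Finset.mem_univ z, Finset.mem_image.mpr
      ⟨i, Finset.mem_filter.mpr ⟨(mem_coe_range _ _).mpr ⟨h0, hlt⟩, he⟩, rfl⟩⟩

lemma card_occ {p : Finset V} (hp : p ∈ T.edges) : (τ.occ p).card = 2 := by
  have hco := τ.cover p hp
  rw [occ, Finset.card_biUnion]
  · have hc : ∀ z : Fin τ.zigzags.length,
        (((Finset.range (τ.zigzags.get z).length).filter
          fun i => (τ.zigzags.get z).e (i : ℤ) = p).image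
            fun i => ((z, i) : Fin τ.zigzags.length × ℤ)).card = (τ.zigzags.get z).mult p := by
      intro z
      rw [Finset.card_image_of_injective _ (fun i j hij => by
        have h2 := congrArg Prod.snd hij
        exact h2)]
      rfl
    rw [list_sum_map_get] at hco
    simp only [hc]
    exact hco
  · intro z₁ _ z₂ _ hzz
    rw [Function.onFun, Finset.disjoint_left]
    intro s hs1 hs2
    obtain ⟨i₁, -, h₁⟩ := Finset.mem_image.mp hs1
    obtain ⟨i₂, -, h₂⟩ := Finset.mem_image.mp hs2
    apply hzz
    have e1 := congrArg Prod.fst h₁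
    have e2 := congrArg Prod.fst h₂
    simp only at e1 e2
    rw [e1, e2]

lemma dirOf_of_window {p : Finset V} {d : V × V}
    (h : ∀ s ∈ τ.occ p, (τ.zigzags.get s.1).dir s.2 = d) : τ.dirOf p d := by
  intro Z hZ i hi
  obtain ⟨z, rfl⟩ := List.mem_iff_get.mp hZ
  have hL : (0 : ℤ) < ((τ.zigzags.get z).length : ℤ) := by
    exact_mod_cast (τ.zigzags.get z).period_spec.1
  have hdvd : ((τ.zigzags.get z).length : ℤ) ∣ i % ((τ.zigzags.get z).length : ℤ) - i :=
    ⟨-(i / ((τ.zigzags.get z).length : ℤ)), by rw [Int.emod_def]; ring⟩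
  have hmem : ((z, i % ((τ.zigzags.get z).length : ℤ)) : Fin τ.zigzags.length × ℤ) ∈ τ.occ p := by
    rw [mem_occ]
    refine ⟨Int.emod_nonneg i (by omega), Int.emod_lt_of_pos i hL, ?_⟩
    rw [(τ.zigzags.get z).e_congr hdvd]
    exact hi
  have hd := h _ hmem
  rw [← (τ.zigzags.get z).dir_congr hdvd]
  exact hd

lemma window_dir {p : Finset V} (hII : τ.TypeII p) :
    ∃ d, ∀ s ∈ τ.occ p, (τ.zigzags.get s.1).dir s.2 = d := by
  obtain ⟨d, hd⟩ := hII
  refine ⟨d, fun s hs => ?_⟩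
  rw [mem_occ] at hs
  exact hd _ (τ.zigzags.get_mem _) s.2 hs.2.2

lemma faceI_faceII_false {f : Finset V} (h1 : τ.FaceTypeI f) (h2 : τ.FaceTypeII f) : False := by
  obtain ⟨x, y, z, hfeq, hxy, hyz, hxz, d1, d2, d3⟩ := h2
  obtain ⟨p, hp, hu⟩ := h1
  have m1 : ({x, y} : Finset V) ∈ Finset.powersetCard 2 f ∧ τ.TypeII {x, y} := by
    refine ⟨Finset.mem_powersetCard.mpr ⟨?_, Finset.card_pair hxy⟩, ⟨(x, y), d1⟩⟩
    rw [hfeq]; intro v hv; simp at hv ⊢; tauto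
  have m2 : ({y, z} : Finset V) ∈ Finset.powersetCard 2 f ∧ τ.TypeII {y, z} := by
    refine ⟨Finset.mem_powersetCard.mpr ⟨?_, Finset.card_pair hyz⟩, ⟨(y, z), d2⟩⟩
    rw [hfeq]; intro v hv; simp at hv ⊢; tauto
  have e1 := hu _ m1
  have e2 := hu _ m2
  rw [← e2] at e1
  have hx : x ∈ ({y, z} : Finset V) := by rw [← e1]; simp
  simp only [Finset.mem_insert, Finset.mem_singleton] at hx
  tauto

end ZOrientation

/-- The sign of an occurrence relative to the cyclic orientation (x,y,z). -/
def sgn (τ : T.ZOrientation) (x y z : V) (s : Fin τ.zigzags.length × ℤ) : Prop :=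
  Fwd x y z ((τ.zigzags.get s.1).dir s.2).1 ((τ.zigzags.get s.1).dir s.2).2

/-- Corner partner of an occurrence at the face `F`. -/
noncomputable def flip (τ : T.ZOrientation) (F : Finset V) (s : Fin τ.zigzags.length × ℤ) :
    Fin τ.zigzags.length × ℤ :=
  (s.1, if (τ.zigzags.get s.1).f s.2 = F
    then (s.2 + 1) % ((τ.zigzags.get s.1).length : ℤ)
    else (s.2 - 1) % ((τ.zigzags.get s.1).length : ℤ))

end Triangulation
namespace Triangulation

variable {V : Type} [DecidableEq V] {T : Triangulation V}

lemma flip_pos (τ : T.ZOrientation) (F : Finset V) (s : Fin τ.zigzags.length × ℤ)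
    (h : (τ.zigzags.get s.1).f s.2 = F) :
    flip τ F s = (s.1, (s.2 + 1) % ((τ.zigzags.get s.1).length : ℤ)) := by
  simp only [flip, if_pos h]

lemma flip_neg (τ : T.ZOrientation) (F : Finset V) (s : Fin τ.zigzags.length × ℤ)
    (h : ¬ (τ.zigzags.get s.1).f s.2 = F) :
    flip τ F s = (s.1, (s.2 - 1) % ((τ.zigzags.get s.1).length : ℤ)) := by
  simp only [flip, if_neg h]

lemma partner_spec (hT : T.IsProper) (τ : T.ZOrientation) {x y z : V} {F : Finset V}
    (hxy : x ≠ y) (hyz : y ≠ z) (hxz : x ≠ z) (hF : F = {x, y, z}) (hf : F ∈ T.faces)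
    (s : Fin τ.zigzags.length × ℤ)
    (h0 : 0 ≤ s.2) (hlt : s.2 < ((τ.zigzags.get s.1).length : ℤ))
    (heF : (τ.zigzags.get s.1).e s.2 ⊆ F) :
    0 ≤ (flip τ F s).2 ∧ (flip τ F s).2 < ((τ.zigzags.get s.1).length : ℤ) ∧
      (τ.zigzags.get s.1).e (flip τ F s).2 ⊆ F ∧
      (τ.zigzags.get s.1).e (flip τ F s).2 ≠ (τ.zigzags.get s.1).e s.2 ∧
      (sgn τ x y z (flip τ F s) ↔ sgn τ x y z s) ∧ flip τ F (flip τ F s) = s := by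
  obtain ⟨zi, i⟩ := s
  simp only at h0 hlt heF ⊢
  set W : Zigzag T := τ.zigzags.get zi with hW
  have hLpos : (0 : ℤ) < (W.length : ℤ) := by exact_mod_cast W.period_spec.1
  have heE := W.e_mem i
  have hfl := W.sub_left i
  have hfr : W.e i ⊆ W.f (i - 1) := by
    have h := W.sub_right (i - 1); rwa [show i - 1 + 1 = i by ring] at h
  have hfne : W.f (i - 1) ≠ W.f i := by
    have h := W.faces_ne (i - 1); rwa [show i - 1 + 1 = i by ring] at h
  have hfc : F = W.f (i - 1) ∨ F = W.f i :=
    face_eq_or hT heE (W.f_mem (i - 1)) (W.f_mem i) hf hfr hfl heF hfne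
  by_cases hcond : W.f i = F
  · -- the partner is the occurrence at i + 1 (reduced mod the period)
    have hflip : flip τ F (zi, i) = (zi, (i + 1) % (W.length : ℤ)) :=
      flip_pos τ F (zi, i) hcond
    have hdvd : (W.length : ℤ) ∣ (i + 1) % (W.length : ℤ) - (i + 1) :=
      ⟨-((i + 1) / (W.length : ℤ)), by rw [Int.emod_def]; ring⟩
    have hej : W.e ((i + 1) % (W.length : ℤ)) = W.e (i + 1) := W.e_congr hdvd
    have hfj : W.f ((i + 1) % (W.length : ℤ)) = W.f (i + 1) := W.f_congr hT hdvd
    have hdirj : W.dir ((i + 1) % (W.length : ℤ)) = W.dir (i + 1) := W.dir_congr hdvd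
    have hj0 : 0 ≤ (i + 1) % (W.length : ℤ) := Int.emod_nonneg _ (by omega)
    have hjlt : (i + 1) % (W.length : ℤ) < (W.length : ℤ) := Int.emod_lt_of_pos _ hLpos
    have hsubF : W.e (i + 1) ⊆ F := by rw [← hcond]; exact W.sub_right i
    have hene : W.e (i + 1) ≠ W.e i := (W.edges_ne i).symm
    have hfjF : W.f ((i + 1) % (W.length : ℤ)) ≠ F := by
      rw [hfj]
      intro hcon
      exact W.faces_ne i (by rw [hcond, hcon])
    have hinv : flip τ F (flip τ F (zi, i)) = (zi, i) := by
      rw [hflip]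
      rw [flip_neg τ F _ hfjF]
      have hmod : ((i + 1) % (W.length : ℤ) - 1) % (W.length : ℤ) = i := by
        have hd2 : (W.length : ℤ) ∣ ((i + 1) % (W.length : ℤ) - 1) - i := by
          rw [show (i + 1) % (W.length : ℤ) - 1 - i = (i + 1) % (W.length : ℤ) - (i + 1) by ring]
          exact hdvd
        rw [emodCongr hd2, Int.emod_eq_of_lt h0 hlt]
      rw [hmod]
    have hsgn : sgn τ x y z (flip τ F (zi, i)) ↔ sgn τ x y z (zi, i) := by
      rw [hflip]
      show Fwd x y z (W.dir ((i + 1) % (W.length : ℤ))).1 (W.dir ((i + 1) % (W.length : ℤ))).2 ↔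
        Fwd x y z (W.dir i).1 (W.dir i).2
      rw [hdirj]
      show Fwd x y z (W.head (i + 1 - 1)) (W.head (i + 1)) ↔
        Fwd x y z (W.head (i - 1)) (W.head i)
      rw [show i + 1 - 1 = i by ring]
      exact (W.corner hT i hxy hyz hxz (by rw [hcond, hF])).symm
    rw [hflip]
    exact ⟨hj0, hjlt, by rw [hej]; exact hsubF, by rw [hej]; exact hene,
      by rw [← hflip]; exact hsgn, by rw [← hflip]; exact hinv⟩
  · -- the partner is the occurrence at i - 1 (reduced mod the period)
    have hcond2 : W.f (i - 1) = F := by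
      rcases hfc with h | h
      · exact h.symm
      · exact absurd h.symm hcond
    have hflip : flip τ F (zi, i) = (zi, (i - 1) % (W.length : ℤ)) :=
      flip_neg τ F (zi, i) hcond
    have hdvd : (W.length : ℤ) ∣ (i - 1) % (W.length : ℤ) - (i - 1) :=
      ⟨-((i - 1) / (W.length : ℤ)), by rw [Int.emod_def]; ring⟩
    have hej : W.e ((i - 1) % (W.length : ℤ)) = W.e (i - 1) := W.e_congr hdvd
    have hfj : W.f ((i - 1) % (W.length : ℤ)) = W.f (i - 1) := W.f_congr hT hdvd
    have hdirj : W.dir ((i - 1) % (W.length : ℤ)) = W.dir (i - 1) := W.dir_congr hdvd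
    have hj0 : 0 ≤ (i - 1) % (W.length : ℤ) := Int.emod_nonneg _ (by omega)
    have hjlt : (i - 1) % (W.length : ℤ) < (W.length : ℤ) := Int.emod_lt_of_pos _ hLpos
    have hsubF : W.e (i - 1) ⊆ F := by rw [← hcond2]; exact W.sub_left (i - 1)
    have hene : W.e (i - 1) ≠ W.e i := by
      have h := W.edges_ne (i - 1); rwa [show i - 1 + 1 = i by ring] at h
    have hfjF : W.f ((i - 1) % (W.length : ℤ)) = F := by rw [hfj, hcond2]
    have hinv : flip τ F (flip τ F (zi, i)) = (zi, i) := by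
      rw [hflip]
      rw [flip_pos τ F _ hfjF]
      have hmod : ((i - 1) % (W.length : ℤ) + 1) % (W.length : ℤ) = i := by
        have hd2 : (W.length : ℤ) ∣ ((i - 1) % (W.length : ℤ) + 1) - i := by
          rw [show (i - 1) % (W.length : ℤ) + 1 - i = (i - 1) % (W.length : ℤ) - (i - 1) by ring]
          exact hdvd
        rw [emodCongr hd2, Int.emod_eq_of_lt h0 hlt]
      rw [hmod]
    have hsgn : sgn τ x y z (flip τ F (zi, i)) ↔ sgn τ x y z (zi, i) := by
      rw [hflip]
      show Fwd x y z (W.dir ((i - 1) % (W.length : ℤ))).1 (W.dir ((i - 1) % (W.length : ℤ))).2 ↔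
        Fwd x y z (W.dir i).1 (W.dir i).2
      rw [hdirj]
      show Fwd x y z (W.head (i - 1 - 1)) (W.head (i - 1)) ↔
        Fwd x y z (W.head (i - 1)) (W.head i)
      have hcor := W.corner hT (i - 1) hxy hyz hxz (by rw [hcond2, hF])
      rw [show i - 1 + 1 = i by ring] at hcor
      exact hcor
    rw [hflip]
    exact ⟨hj0, hjlt, by rw [hej]; exact hsubF, by rw [hej]; exact hene,
      by rw [← hflip]; exact hsgn, by rw [← hflip]; exact hinv⟩

end Triangulation
set_option maxHeartbeats 2000000 in
/-- Given a fixed z-orientation of a triangulation, every face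
satisfies exactly one of: (I) it has exactly two edges of type I and one edge
of type II, or (II) all three of its edges are of type II and their directions
form a directed 3-cycle around the face. -/
theorem stmt6 {V : Type} [DecidableEq V] (T : Triangulation V) (hT : T.IsProper)
    (τ : T.ZOrientation) :
    ∀ f ∈ T.faces, (τ.FaceTypeI f ∧ ¬ τ.FaceTypeII f) ∨
      (τ.FaceTypeII f ∧ ¬ τ.FaceTypeI f) := by
  intro f hf
  obtain ⟨x, y, z, hxy, hxz, hyz, rfl⟩ := Finset.card_eq_three.mp (hT.1 f hf)
  set F : Finset V := {x, y, z} with hF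
  have hFfaces : F ∈ T.faces := hf
  have hsub_a : ({x, y} : Finset V) ⊆ F := by rw [hF]; intro v hv; simp at hv ⊢; tauto
  have hsub_b : ({y, z} : Finset V) ⊆ F := by rw [hF]; intro v hv; simp at hv ⊢; tauto
  have hsub_c : ({z, x} : Finset V) ⊆ F := by rw [hF]; intro v hv; simp at hv ⊢; tauto
  have hmem_edges : ∀ p : Finset V, p ⊆ F → p.card = 2 → p ∈ T.edges := by
    intro p hp1 hp2
    have hm : p ∈ T.faces.biUnion fun g => g.powersetCard 2 :=
      Finset.mem_biUnion.mpr ⟨F, hFfaces, Finset.mem_powersetCard.mpr ⟨hp1, hp2⟩⟩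
    exact hm
  have hEa : ({x, y} : Finset V) ∈ T.edges := hmem_edges _ hsub_a (Finset.card_pair hxy)
  have hEb : ({y, z} : Finset V) ∈ T.edges := hmem_edges _ hsub_b (Finset.card_pair hyz)
  have hEc : ({z, x} : Finset V) ∈ T.edges := hmem_edges _ hsub_c (Finset.card_pair (Ne.symm hxz))
  have hclass : ∀ p : Finset V, p ⊆ F → p.card = 2 →
      p = ({x, y} : Finset V) ∨ p = ({y, z} : Finset V) ∨ p = ({z, x} : Finset V) := by
    intro p hp1 hp2
    obtain ⟨u, v, huv, rfl⟩ := Finset.card_eq_two.mp hp2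
    have hu : u ∈ F := hp1 (by simp)
    have hv : v ∈ F := hp1 (by simp)
    rw [hF] at hu hv
    simp only [Finset.mem_insert, Finset.mem_singleton] at hu hv
    rcases hu with rfl | rfl | rfl <;> rcases hv with rfl | rfl | rfl <;>
      first
        | exact absurd rfl huv
        | exact Or.inl rfl
        | exact Or.inl (Finset.pair_comm _ _)
        | exact Or.inr (Or.inl rfl)
        | exact Or.inr (Or.inl (Finset.pair_comm _ _))
        | exact Or.inr (Or.inr rfl)
        | exact Or.inr (Or.inr (Finset.pair_comm _ _))
  have hab : ({x, y} : Finset V) ≠ ({y, z} : Finset V) := by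
    intro h
    have hx : x ∈ ({y, z} : Finset V) := h ▸ Finset.mem_insert_self x {y}
    simp only [Finset.mem_insert, Finset.mem_singleton] at hx
    tauto
  have hac : ({x, y} : Finset V) ≠ ({z, x} : Finset V) := by
    intro h
    have hy : y ∈ ({z, x} : Finset V) := h ▸ (by simp)
    simp only [Finset.mem_insert, Finset.mem_singleton] at hy
    rcases hy with h' | h'
    · exact hyz h'
    · exact hxy h'.symm
  have hbc : ({y, z} : Finset V) ≠ ({z, x} : Finset V) := by
    intro h
    have hy : y ∈ ({z, x} : Finset V) := h ▸ Finset.mem_insert_self y {z}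
    simp only [Finset.mem_insert, Finset.mem_singleton] at hy
    rcases hy with h' | h'
    · exact hyz h'
    · exact hxy h'.symm
  have hfxy : Triangulation.Fwd x y z x y := Or.inl ⟨rfl, rfl⟩
  have hfyz : Triangulation.Fwd x y z y z := Or.inr (Or.inl ⟨rfl, rfl⟩)
  have hfzx : Triangulation.Fwd x y z z x := Or.inr (Or.inr ⟨rfl, rfl⟩)
  have hnyx : ¬ Triangulation.Fwd x y z y x := by
    rintro (⟨e1, e2⟩ | ⟨e1, e2⟩ | ⟨e1, e2⟩)
    · exact hxy e1.symm
    · exact hxz e2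
    · exact hyz e1
  have hnzy : ¬ Triangulation.Fwd x y z z y := by
    rintro (⟨e1, e2⟩ | ⟨e1, e2⟩ | ⟨e1, e2⟩)
    · exact hxz e1.symm
    · exact hyz e1.symm
    · exact hxy e2.symm
  have hnxz : ¬ Triangulation.Fwd x y z x z := by
    rintro (⟨e1, e2⟩ | ⟨e1, e2⟩ | ⟨e1, e2⟩)
    · exact hyz e2.symm
    · exact hxy e1
    · exact hxz e1
  -- the generic edge lemma
  have hgen : ∀ (p : Finset V) (p₁ p₂ : V), p ∈ T.edges → p = {p₁, p₂} → p₁ ≠ p₂ →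
      Triangulation.Fwd x y z p₁ p₂ → ¬ Triangulation.Fwd x y z p₂ p₁ →
      ((((τ.occ p).filter (Triangulation.sgn τ x y z)).card = 2 → τ.dirOf p (p₁, p₂)) ∧
       (((τ.occ p).filter (Triangulation.sgn τ x y z)).card = 0 → τ.dirOf p (p₂, p₁)) ∧
       (τ.TypeII p → ((τ.occ p).filter (Triangulation.sgn τ x y z)).card = 0 ∨
          ((τ.occ p).filter (Triangulation.sgn τ x y z)).card = 2)) := by
    intro p p₁ p₂ hpE hpEq hp12 hFwd hnFwd
    have hc2 : (τ.occ p).card = 2 := τ.card_occ hpE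
    have hpair_ne : ((p₁ : V), p₂) ≠ ((p₂ : V), p₁) := by
      intro hcon
      injection hcon with hL hR
      exact hp12 hL
    have hdirp : ∀ s ∈ τ.occ p,
        ((τ.zigzags.get s.1).dir s.2 = (p₁, p₂) ∧ Triangulation.sgn τ x y z s) ∨
        ((τ.zigzags.get s.1).dir s.2 = (p₂, p₁) ∧ ¬ Triangulation.sgn τ x y z s) := by
      intro s hs
      have he : (τ.zigzags.get s.1).e s.2 = {p₁, p₂} := by
        rw [(τ.mem_occ.mp hs).2.2, hpEq]
      have hp := (τ.zigzags.get s.1).e_eq_pair s.2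
      rw [he] at hp
      have hdir_eq : (τ.zigzags.get s.1).dir s.2
          = ((τ.zigzags.get s.1).head (s.2 - 1), (τ.zigzags.get s.1).head s.2) := rfl
      have hsgn_eq : Triangulation.sgn τ x y z s
          = Triangulation.Fwd x y z ((τ.zigzags.get s.1).head (s.2 - 1))
            ((τ.zigzags.get s.1).head s.2) := rfl
      rcases Triangulation.pair_cases ((τ.zigzags.get s.1).head_ne s.2) hp.symm with
        ⟨e1, e2⟩ | ⟨e1, e2⟩
      · left
        constructor
        · rw [hdir_eq, e1, e2]
        · rw [hsgn_eq, e1, e2]; exact hFwd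
      · right
        constructor
        · rw [hdir_eq, e1, e2]
        · rw [hsgn_eq, e1, e2]; exact hnFwd
    have hmain : ∀ s ∈ τ.occ p,
        (Triangulation.sgn τ x y z s ↔ (τ.zigzags.get s.1).dir s.2 = (p₁, p₂)) ∧
        (¬ Triangulation.sgn τ x y z s ↔ (τ.zigzags.get s.1).dir s.2 = (p₂, p₁)) := by
      intro s hs
      rcases hdirp s hs with ⟨e1, e2⟩ | ⟨e1, e2⟩
      · exact ⟨iff_of_true e2 e1,
          iff_of_false (not_not_intro e2) (fun hc => hpair_ne (e1.symm.trans hc))⟩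
      · exact ⟨iff_of_false e2 (fun hc => hpair_ne (hc.symm.trans e1)),
          iff_of_true e2 e1⟩
    refine ⟨?_, ?_, ?_⟩
    · intro hcard
      apply τ.dirOf_of_window
      intro s hs
      have hfeq : (τ.occ p).filter (Triangulation.sgn τ x y z) = τ.occ p :=
        Finset.eq_of_subset_of_card_le (Finset.filter_subset _ _) (by rw [hcard, hc2])
      have hall : Triangulation.sgn τ x y z s := by
        have hmem2 : s ∈ (τ.occ p).filter (Triangulation.sgn τ x y z) := by
          rw [hfeq]; exact hs
        exact (Finset.mem_filter.mp hmem2).2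
      exact ((hmain s hs).1).mp hall
    · intro hcard
      apply τ.dirOf_of_window
      intro s hs
      have hnone := Finset.filter_eq_empty_iff.mp (Finset.card_eq_zero.mp hcard)
      exact ((hmain s hs).2).mp (hnone hs)
    · rintro ⟨d, hd⟩
      by_cases hdd : d = (p₁, p₂)
      · right
        rw [Finset.filter_true_of_mem, hc2]
        intro s hs
        have hds := hd _ (τ.zigzags.get_mem _) s.2 ((τ.mem_occ.mp hs).2.2)
        exact ((hmain s hs).1).mpr (by rw [hds, hdd])
      · left
        rw [Finset.card_eq_zero, Finset.filter_eq_empty_iff]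
        intro s hs
        have hds := hd _ (τ.zigzags.get_mem _) s.2 ((τ.mem_occ.mp hs).2.2)
        rcases hdirp s hs with ⟨e1, e2⟩ | ⟨e1, e2⟩
        · exact absurd (hds.symm.trans e1) hdd
        · exact e2
  have hga := hgen {x, y} x y hEa rfl hxy hfxy hnyx
  have hgb := hgen {y, z} y z hEb rfl hyz hfyz hnzy
  have hgc := hgen {z, x} z x hEc rfl (Ne.symm hxz) hfzx hnxz
  -- the union of occurrences and the corner involution
  set O : Finset (Fin τ.zigzags.length × ℤ) :=
    τ.occ {x, y} ∪ τ.occ {y, z} ∪ τ.occ {z, x} with hO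
  have hOmem : ∀ s : Fin τ.zigzags.length × ℤ, s ∈ O ↔
      (0 ≤ s.2 ∧ s.2 < ((τ.zigzags.get s.1).length : ℤ) ∧ (τ.zigzags.get s.1).e s.2 ⊆ F) := by
    intro s
    rw [hO]
    simp only [Finset.mem_union, Triangulation.ZOrientation.mem_occ]
    constructor
    · rintro ((⟨h0, hlt, he⟩ | ⟨h0, hlt, he⟩) | ⟨h0, hlt, he⟩)
      · exact ⟨h0, hlt, by rw [he]; exact hsub_a⟩
      · exact ⟨h0, hlt, by rw [he]; exact hsub_b⟩
      · exact ⟨h0, hlt, by rw [he]; exact hsub_c⟩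
    · rintro ⟨h0, hlt, hsubF⟩
      rcases hclass _ hsubF ((τ.zigzags.get s.1).card_e s.2) with he | he | he
      · exact Or.inl (Or.inl ⟨h0, hlt, he⟩)
      · exact Or.inl (Or.inr ⟨h0, hlt, he⟩)
      · exact Or.inr ⟨h0, hlt, he⟩
  have hpartner : ∀ s ∈ O, Triangulation.flip τ F s ∈ O ∧
      (τ.zigzags.get (Triangulation.flip τ F s).1).e (Triangulation.flip τ F s).2 ≠
        (τ.zigzags.get s.1).e s.2 ∧
      (Triangulation.sgn τ x y z (Triangulation.flip τ F s) ↔ Triangulation.sgn τ x y z s) ∧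
      Triangulation.flip τ F (Triangulation.flip τ F s) = s := by
    intro s hs
    obtain ⟨h0, hlt, hsubF⟩ := (hOmem s).mp hs
    obtain ⟨h0', hlt', hsub', hne', hsgn', hinv'⟩ :=
      Triangulation.partner_spec hT τ hxy hyz hxz hF hFfaces s h0 hlt hsubF
    have hfst : (Triangulation.flip τ F s).1 = s.1 := rfl
    refine ⟨(hOmem _).mpr ⟨h0', by rw [hfst]; exact hlt', by rw [hfst]; exact hsub'⟩,
      by rw [hfst]; exact hne', hsgn', hinv'⟩
  have hdis_ab : Disjoint (τ.occ ({x, y} : Finset V)) (τ.occ ({y, z} : Finset V)) := by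
    rw [Finset.disjoint_left]
    intro s hs1 hs2
    exact hab ((((τ.mem_occ).mp hs1).2.2).symm.trans (((τ.mem_occ).mp hs2).2.2))
  have hdis_ac : Disjoint (τ.occ ({x, y} : Finset V)) (τ.occ ({z, x} : Finset V)) := by
    rw [Finset.disjoint_left]
    intro s hs1 hs2
    exact hac ((((τ.mem_occ).mp hs1).2.2).symm.trans (((τ.mem_occ).mp hs2).2.2))
  have hdis_bc : Disjoint (τ.occ ({y, z} : Finset V)) (τ.occ ({z, x} : Finset V)) := by
    rw [Finset.disjoint_left]
    intro s hs1 hs2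
    exact hbc ((((τ.mem_occ).mp hs1).2.2).symm.trans (((τ.mem_occ).mp hs2).2.2))
  have hOcard : (O.filter (Triangulation.sgn τ x y z)).card =
      ((τ.occ ({x, y} : Finset V)).filter (Triangulation.sgn τ x y z)).card +
      ((τ.occ ({y, z} : Finset V)).filter (Triangulation.sgn τ x y z)).card +
      ((τ.occ ({z, x} : Finset V)).filter (Triangulation.sgn τ x y z)).card := by
    rw [hO, Finset.filter_union, Finset.filter_union,
      Finset.card_union_of_disjoint (Finset.disjoint_union_left.mpr
        ⟨Finset.disjoint_filter_filter hdis_ac, Finset.disjoint_filter_filter hdis_bc⟩),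
      Finset.card_union_of_disjoint (Finset.disjoint_filter_filter hdis_ab)]
  have hparity : Even
      (((τ.occ ({x, y} : Finset V)).filter (Triangulation.sgn τ x y z)).card +
       ((τ.occ ({y, z} : Finset V)).filter (Triangulation.sgn τ x y z)).card +
       ((τ.occ ({z, x} : Finset V)).filter (Triangulation.sgn τ x y z)).card) := by
    rw [← hOcard]
    apply even_card_invol (O.filter (Triangulation.sgn τ x y z)).card _
      (Triangulation.flip τ F) rfl
    · intro s hs
      obtain ⟨hsO, hσs⟩ := Finset.mem_filter.mp hs
      obtain ⟨hp1, hp2, hp3, hp4⟩ := hpartner s hsO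
      exact Finset.mem_filter.mpr ⟨hp1, hp3.mpr hσs⟩
    · intro s hs
      exact (hpartner s (Finset.mem_filter.mp hs).1).2.2.2
    · intro s hs hcon
      have hne2 := (hpartner s (Finset.mem_filter.mp hs).1).2.1
      rw [hcon] at hne2
      exact hne2 rfl
  have hall2 : ∀ p : Finset V, p ∈ T.edges →
      (((τ.occ p).filter (Triangulation.sgn τ x y z)).card = 2 ↔
        ∀ s ∈ τ.occ p, Triangulation.sgn τ x y z s) := by
    intro p hp
    constructor
    · intro h s hs
      have hfeq : (τ.occ p).filter (Triangulation.sgn τ x y z) = τ.occ p :=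
        Finset.eq_of_subset_of_card_le (Finset.filter_subset _ _) (by rw [h, τ.card_occ hp])
      have hmem2 : s ∈ (τ.occ p).filter (Triangulation.sgn τ x y z) := by rw [hfeq]; exact hs
      exact (Finset.mem_filter.mp hmem2).2
    · intro h
      rw [Finset.filter_true_of_mem h]
      exact τ.card_occ hp
  have hall0 : ∀ p : Finset V,
      (((τ.occ p).filter (Triangulation.sgn τ x y z)).card = 0 ↔
        ∀ s ∈ τ.occ p, ¬ Triangulation.sgn τ x y z s) := by
    intro p
    rw [Finset.card_eq_zero, Finset.filter_eq_empty_iff]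
  have hTII_k : ∀ q : Finset V, q ∈ Finset.powersetCard 2 F → τ.TypeII q →
      ((τ.occ q).filter (Triangulation.sgn τ x y z)).card ≠ 1 := by
    intro q hq hqII
    obtain ⟨hsubq, hcardq⟩ := Finset.mem_powersetCard.mp hq
    rcases hclass q hsubq hcardq with rfl | rfl | rfl
    · rcases hga.2.2 hqII with h | h <;> omega
    · rcases hgb.2.2 hqII with h | h <;> omega
    · rcases hgc.2.2 hqII with h | h <;> omega
  have hstep : ∀ s ∈ O, ∃ t : Fin τ.zigzags.length × ℤ,
      (t ∈ τ.occ ({x, y} : Finset V) ∨ t ∈ τ.occ ({y, z} : Finset V) ∨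
        t ∈ τ.occ ({z, x} : Finset V)) ∧
      (Triangulation.sgn τ x y z t ↔ Triangulation.sgn τ x y z s) ∧
      (τ.zigzags.get t.1).e t.2 ≠ (τ.zigzags.get s.1).e s.2 := by
    intro s hs
    obtain ⟨hp1, hp2, hp3, -⟩ := hpartner s hs
    refine ⟨Triangulation.flip τ F s, ?_, hp3, hp2⟩
    rw [hO] at hp1
    rcases Finset.mem_union.mp hp1 with h | h
    · rcases Finset.mem_union.mp h with h' | h'
      · exact Or.inl h'
      · exact Or.inr (Or.inl h')
    · exact Or.inr (Or.inr h)
  have hkaLe : ((τ.occ ({x, y} : Finset V)).filter (Triangulation.sgn τ x y z)).card ≤ 2 :=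
    le_trans (Finset.card_filter_le _ _) (le_of_eq (τ.card_occ hEa))
  have hkbLe : ((τ.occ ({y, z} : Finset V)).filter (Triangulation.sgn τ x y z)).card ≤ 2 :=
    le_trans (Finset.card_filter_le _ _) (le_of_eq (τ.card_occ hEb))
  have hkcLe : ((τ.occ ({z, x} : Finset V)).filter (Triangulation.sgn τ x y z)).card ≤ 2 :=
    le_trans (Finset.card_filter_le _ _) (le_of_eq (τ.card_occ hEc))
  obtain ⟨m, hm⟩ := hparity
  set ka := ((τ.occ ({x, y} : Finset V)).filter (Triangulation.sgn τ x y z)).card with hkadef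
  set kb := ((τ.occ ({y, z} : Finset V)).filter (Triangulation.sgn τ x y z)).card with hkbdef
  set kc := ((τ.occ ({z, x} : Finset V)).filter (Triangulation.sgn τ x y z)).card with hkcdef
  by_cases h1 : ka = 1 <;> by_cases h2 : kb = 1 <;> by_cases h3 : kc = 1
  · exact absurd hm (by omega)
  · -- FaceTypeI with type II edge {z, x}
    have hk02 : kc = 0 ∨ kc = 2 := by omega
    have hII : τ.TypeII ({z, x} : Finset V) := by
      rcases hk02 with h | h
      · exact ⟨(x, z), hgc.2.1 h⟩
      · exact ⟨(z, x), hgc.1 h⟩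
    have hFI : τ.FaceTypeI F := by
      refine ⟨{z, x}, ⟨Finset.mem_powersetCard.mpr ⟨hsub_c, Finset.card_pair (Ne.symm hxz)⟩,
        hII⟩, ?_⟩
      rintro q ⟨hq1, hq2⟩
      have hnotone := hTII_k q hq1 hq2
      obtain ⟨hsubq, hcardq⟩ := Finset.mem_powersetCard.mp hq1
      rcases hclass q hsubq hcardq with rfl | rfl | rfl
      · exact absurd h1 hnotone
      · exact absurd h2 hnotone
      · rfl
    exact Or.inl ⟨hFI, fun hFII => τ.faceI_faceII_false hFI hFII⟩
  · -- FaceTypeI with type II edge {y, z}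
    have hk02 : kb = 0 ∨ kb = 2 := by omega
    have hII : τ.TypeII ({y, z} : Finset V) := by
      rcases hk02 with h | h
      · exact ⟨(z, y), hgb.2.1 h⟩
      · exact ⟨(y, z), hgb.1 h⟩
    have hFI : τ.FaceTypeI F := by
      refine ⟨{y, z}, ⟨Finset.mem_powersetCard.mpr ⟨hsub_b, Finset.card_pair hyz⟩, hII⟩, ?_⟩
      rintro q ⟨hq1, hq2⟩
      have hnotone := hTII_k q hq1 hq2
      obtain ⟨hsubq, hcardq⟩ := Finset.mem_powersetCard.mp hq1
      rcases hclass q hsubq hcardq with rfl | rfl | rfl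
      · exact absurd h1 hnotone
      · rfl
      · exact absurd h3 hnotone
    exact Or.inl ⟨hFI, fun hFII => τ.faceI_faceII_false hFI hFII⟩
  · exact absurd hm (by omega)
  · -- FaceTypeI with type II edge {x, y}
    have hk02 : ka = 0 ∨ ka = 2 := by omega
    have hII : τ.TypeII ({x, y} : Finset V) := by
      rcases hk02 with h | h
      · exact ⟨(y, x), hga.2.1 h⟩
      · exact ⟨(x, y), hga.1 h⟩
    have hFI : τ.FaceTypeI F := by
      refine ⟨{x, y}, ⟨Finset.mem_powersetCard.mpr ⟨hsub_a, Finset.card_pair hxy⟩, hII⟩, ?_⟩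
      rintro q ⟨hq1, hq2⟩
      have hnotone := hTII_k q hq1 hq2
      obtain ⟨hsubq, hcardq⟩ := Finset.mem_powersetCard.mp hq1
      rcases hclass q hsubq hcardq with rfl | rfl | rfl
      · rfl
      · exact absurd h2 hnotone
      · exact absurd h3 hnotone
    exact Or.inl ⟨hFI, fun hFII => τ.faceI_faceII_false hFI hFII⟩
  · exact absurd hm (by omega)
  · exact absurd hm (by omega)
  · -- all of ka, kb, kc are 0 or 2
    have hka' : ka = 0 ∨ ka = 2 := by omega
    have hkb' : kb = 0 ∨ kb = 2 := by omega
    have hkc' : kc = 0 ∨ kc = 2 := by omega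
    rcases hka' with hka0 | hka2 <;> rcases hkb' with hkb0 | hkb2 <;>
      rcases hkc' with hkc0 | hkc2
    · -- (0,0,0): all edges type II, reversed cycle
      have d1 : τ.dirOf {x, y} (y, x) := hga.2.1 hka0
      have d2 : τ.dirOf {y, z} (z, y) := hgb.2.1 hkb0
      have d3 : τ.dirOf {z, x} (x, z) := hgc.2.1 hkc0
      have hFII : τ.FaceTypeII F := by
        refine ⟨y, x, z, ?_, Ne.symm hxy, hxz, hyz, ?_, ?_, ?_⟩
        · rw [hF, Finset.insert_comm]
        · rw [Finset.pair_comm y x]; exact d1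
        · rw [Finset.pair_comm x z]; exact d3
        · rw [Finset.pair_comm z y]; exact d2
      exact Or.inr ⟨hFII, fun hFI => τ.faceI_faceII_false hFI hFII⟩
    · -- (0,0,2): impossible
      exfalso
      obtain ⟨s, hs⟩ := Finset.card_pos.mp
        (show 0 < (τ.occ ({z, x} : Finset V)).card by rw [τ.card_occ hEc]; norm_num)
      have hσs : Triangulation.sgn τ x y z s := (hall2 _ hEc).mp hkc2 s hs
      have hsO : s ∈ O := by rw [hO]; exact Finset.mem_union_right _ hs
      obtain ⟨t, htm, htσ, hte⟩ := hstep s hsO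
      have hes : (τ.zigzags.get s.1).e s.2 = {z, x} := (τ.mem_occ.mp hs).2.2
      rcases htm with ht | ht | ht
      · exact (hall0 _).mp hka0 t ht (htσ.mpr hσs)
      · exact (hall0 _).mp hkb0 t ht (htσ.mpr hσs)
      · exact hte (((τ.mem_occ.mp ht).2.2).trans hes.symm)
    · -- (0,2,0): impossible
      exfalso
      obtain ⟨s, hs⟩ := Finset.card_pos.mp
        (show 0 < (τ.occ ({y, z} : Finset V)).card by rw [τ.card_occ hEb]; norm_num)
      have hσs : Triangulation.sgn τ x y z s := (hall2 _ hEb).mp hkb2 s hs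
      have hsO : s ∈ O := by
        rw [hO]; exact Finset.mem_union_left _ (Finset.mem_union_right _ hs)
      obtain ⟨t, htm, htσ, hte⟩ := hstep s hsO
      have hes : (τ.zigzags.get s.1).e s.2 = {y, z} := (τ.mem_occ.mp hs).2.2
      rcases htm with ht | ht | ht
      · exact (hall0 _).mp hka0 t ht (htσ.mpr hσs)
      · exact hte (((τ.mem_occ.mp ht).2.2).trans hes.symm)
      · exact (hall0 _).mp hkc0 t ht (htσ.mpr hσs)
    · -- (0,2,2): impossible
      exfalso
      obtain ⟨s, hs⟩ := Finset.card_pos.mp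
        (show 0 < (τ.occ ({x, y} : Finset V)).card by rw [τ.card_occ hEa]; norm_num)
      have hσs : ¬ Triangulation.sgn τ x y z s := (hall0 _).mp hka0 s hs
      have hsO : s ∈ O := by
        rw [hO]; exact Finset.mem_union_left _ (Finset.mem_union_left _ hs)
      obtain ⟨t, htm, htσ, hte⟩ := hstep s hsO
      have hes : (τ.zigzags.get s.1).e s.2 = {x, y} := (τ.mem_occ.mp hs).2.2
      rcases htm with ht | ht | ht
      · exact hte (((τ.mem_occ.mp ht).2.2).trans hes.symm)
      · exact hσs (htσ.mp ((hall2 _ hEb).mp hkb2 t ht))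
      · exact hσs (htσ.mp ((hall2 _ hEc).mp hkc2 t ht))
    · -- (2,0,0): impossible
      exfalso
      obtain ⟨s, hs⟩ := Finset.card_pos.mp
        (show 0 < (τ.occ ({x, y} : Finset V)).card by rw [τ.card_occ hEa]; norm_num)
      have hσs : Triangulation.sgn τ x y z s := (hall2 _ hEa).mp hka2 s hs
      have hsO : s ∈ O := by
        rw [hO]; exact Finset.mem_union_left _ (Finset.mem_union_left _ hs)
      obtain ⟨t, htm, htσ, hte⟩ := hstep s hsO
      have hes : (τ.zigzags.get s.1).e s.2 = {x, y} := (τ.mem_occ.mp hs).2.2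
      rcases htm with ht | ht | ht
      · exact hte (((τ.mem_occ.mp ht).2.2).trans hes.symm)
      · exact (hall0 _).mp hkb0 t ht (htσ.mpr hσs)
      · exact (hall0 _).mp hkc0 t ht (htσ.mpr hσs)
    · -- (2,0,2): impossible
      exfalso
      obtain ⟨s, hs⟩ := Finset.card_pos.mp
        (show 0 < (τ.occ ({y, z} : Finset V)).card by rw [τ.card_occ hEb]; norm_num)
      have hσs : ¬ Triangulation.sgn τ x y z s := (hall0 _).mp hkb0 s hs
      have hsO : s ∈ O := by
        rw [hO]; exact Finset.mem_union_left _ (Finset.mem_union_right _ hs)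
      obtain ⟨t, htm, htσ, hte⟩ := hstep s hsO
      have hes : (τ.zigzags.get s.1).e s.2 = {y, z} := (τ.mem_occ.mp hs).2.2
      rcases htm with ht | ht | ht
      · exact hσs (htσ.mp ((hall2 _ hEa).mp hka2 t ht))
      · exact hte (((τ.mem_occ.mp ht).2.2).trans hes.symm)
      · exact hσs (htσ.mp ((hall2 _ hEc).mp hkc2 t ht))
    · -- (2,2,0): impossible
      exfalso
      obtain ⟨s, hs⟩ := Finset.card_pos.mp
        (show 0 < (τ.occ ({z, x} : Finset V)).card by rw [τ.card_occ hEc]; norm_num)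
      have hσs : ¬ Triangulation.sgn τ x y z s := (hall0 _).mp hkc0 s hs
      have hsO : s ∈ O := by rw [hO]; exact Finset.mem_union_right _ hs
      obtain ⟨t, htm, htσ, hte⟩ := hstep s hsO
      have hes : (τ.zigzags.get s.1).e s.2 = {z, x} := (τ.mem_occ.mp hs).2.2
      rcases htm with ht | ht | ht
      · exact hσs (htσ.mp ((hall2 _ hEa).mp hka2 t ht))
      · exact hσs (htσ.mp ((hall2 _ hEb).mp hkb2 t ht))
      · exact hte (((τ.mem_occ.mp ht).2.2).trans hes.symm)
    · -- (2,2,2): all edges type II, forward cycle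
      have d1 : τ.dirOf {x, y} (x, y) := hga.1 hka2
      have d2 : τ.dirOf {y, z} (y, z) := hgb.1 hkb2
      have d3 : τ.dirOf {z, x} (z, x) := hgc.1 hkc2
      have hFII : τ.FaceTypeII F := ⟨x, y, z, hF, hxy, hyz, hxz, d1, d2, d3⟩
      exact Or.inr ⟨hFII, fun hFI => τ.faceI_faceII_false hFI hFII⟩
end

section
/- A zigzag Z in a triangulation is never equal to its reversal: for every zigzag Z, Z ≠ Z^{-1}. -/
open Finset
open scoped Classical

/-- A zigzag `Z` in a triangulation is never equal (as a cyclic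
sequence, i.e. up to rotation) to its reversal: `Z ≠ Z⁻¹`. -/
theorem stmt7 {V : Type} [DecidableEq V] (T : Triangulation V) (hT : T.IsProper)
    (Z : T.Zigzag) :
    ¬ ∃ k : ℤ, ∀ i : ℤ, Z.e i = Z.e (k - i) := by
  rintro ⟨k, hk⟩
  have hcard : ∀ i : ℤ, (Z.e i).card = 2 := by
    intro i
    have h := Z.e_mem i
    simp only [Triangulation.edges, Finset.mem_biUnion, Finset.mem_powersetCard] at h
    obtain ⟨f, _, _, h2⟩ := h
    exact h2
  rcases Int.even_or_odd k with ⟨m, hm⟩ | ⟨m, hm⟩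
  · have h1 : Z.e (m - 1) = Z.e (m - 1 + 2) := by
      rw [hk (m - 1)]; congr 1; omega
    have hd := Z.disj (m - 1)
    rw [← h1] at hd
    have hempty := disjoint_self.mp hd
    have := hcard (m - 1)
    rw [hempty] at this
    simp at this
  · have h1 : Z.e m = Z.e (m + 1) := by
      rw [hk m]; congr 1; omega
    exact Z.edges_ne m h1
end

section
/- If Γ' is a closed 2-cell embedding of a connected simple finite graph in a closed surface M, then the barycentric-type subdivision T(Γ') obtained by adding one new vertex inside each face and joining it to all vertices of that face is a triangulation of M: all its faces are triangles, and the embedded graph is simple and connected. -/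
open Finset
open scoped Classical

/-- The vertex following position `i` in the boundary cycle `l`. -/
def nextGet {V : Type} (l : List V) (i : Fin l.length) : V :=
  l.get ⟨((i : ℕ) + 1) % l.length, Nat.mod_lt _ i.pos⟩

/-- The multiset of (undirected) edges of a map given by its list of boundary
cycles, counted with multiplicity over all face incidences. -/
def mapEdges {V : Type} [DecidableEq V] (L : List (List V)) : Multiset (Finset V) :=
  ↑(L.flatMap fun l => (List.finRange l.length).map fun i =>
      ({l.get i, nextGet l i} : Finset V))

/-- The underlying simple graph of a map given by boundary cycles. -/
def mapGraph {V : Type} [DecidableEq V] (L : List (List V)) : SimpleGraph V where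
  Adj x y := x ≠ y ∧ ({x, y} : Finset V) ∈ mapEdges L
  symm := ⟨fun x y h => ⟨h.1.symm, by rw [Finset.pair_comm y x]; exact h.2⟩⟩
  loopless := ⟨fun x h => h.1 rfl⟩

/-- The triangulation `T(Γ')` obtained from a map with boundary cycles `L` by
adding one new vertex inside each face and joining it to all vertices of that
face. -/
def mapSubdivision {V : Type} [DecidableEq V] (L : List (List V)) :
    Triangulation (V ⊕ Fin L.length) where
  faces := (Finset.univ : Finset ((j : Fin L.length) × Fin (L.get j).length)).image
    fun p => ({Sum.inr p.1, Sum.inl ((L.get p.1).get p.2),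
               Sum.inl (nextGet (L.get p.1) p.2)} : Finset (V ⊕ Fin L.length))

section Aux
variable {V : Type} [DecidableEq V]

abbrev Inc (L : List (List V)) := (j : Fin L.length) × Fin (L.get j).length

def Eed (L : List (List V)) (p : Inc L) : Finset V :=
  {(L.get p.1).get p.2, nextGet (L.get p.1) p.2}

def Fc (L : List (List V)) (p : Inc L) : Finset (V ⊕ Fin L.length) :=
  {Sum.inr p.1, Sum.inl ((L.get p.1).get p.2), Sum.inl (nextGet (L.get p.1) p.2)}

lemma faces_eq (L : List (List V)) : (mapSubdivision L).faces = Finset.univ.image (Fc L) := rfl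

lemma mapEdges_eq (L : List (List V)) :
    mapEdges L = Multiset.map (Eed L) (Finset.univ : Finset (Inc L)).val := by
  have huv : (Finset.univ : Finset (Inc L)).val
      = Multiset.sigma (↑(List.finRange L.length))
        (fun j => ↑(List.finRange (L.get j).length)) := by
    rw [show (Finset.univ : Finset (Inc L)) = Finset.univ.sigma fun _ => Finset.univ from
      (Finset.univ_sigma_univ).symm]
    show Multiset.sigma ((Finset.univ : Finset (Fin L.length)).val)
        (fun j => ((Finset.univ : Finset (Fin (L.get j).length)).val)) = _
    simp only [Fin.univ_def]
  rw [huv, Multiset.coe_sigma, Multiset.map_coe]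
  unfold mapEdges
  congr 1
  conv_lhs => rw [← List.map_get_finRange L]
  rw [List.sigma]
  simp only [List.flatMap_map, List.map_flatMap, List.map_map]
  rfl

end Aux

namespace StmtAux
variable {V : Type} [DecidableEq V]

lemma mod_succ_ne {n i : ℕ} (hn : 2 ≤ n) (hi : i < n) : (i + 1) % n ≠ i := by
  intro h
  have h1 : i ≡ i + 1 [MOD n] := by
    unfold Nat.ModEq
    rw [Nat.mod_eq_of_lt hi, h]
  have h2 : n ∣ 1 := by simpa using (Nat.modEq_iff_dvd' (by omega)).mp h1
  have := Nat.le_of_dvd (by norm_num) h2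
  omega

lemma mod_succ_inj {n i i' : ℕ} (hi : i < n) (hi' : i' < n)
    (h : (i + 1) % n = (i' + 1) % n) : i = i' := by
  have h2 : i ≡ i' [MOD n] := Nat.ModEq.add_right_cancel' 1 h
  unfold Nat.ModEq at h2
  rwa [Nat.mod_eq_of_lt hi, Nat.mod_eq_of_lt hi'] at h2

variable {L : List (List V)} (hcycle : ∀ l ∈ L, l.Nodup ∧ 3 ≤ l.length)
include hcycle

lemma get_ne_next (j : Fin L.length) (i : Fin (L.get j).length) :
    (L.get j).get i ≠ nextGet (L.get j) i := by
  intro h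
  have hnd : (L.get j).Nodup := by simpa using (hcycle _ (List.get_mem L j)).1
  have hlen : 3 ≤ (L.get j).length := by simpa using (hcycle _ (List.get_mem L j)).2
  have := (hnd.get_inj_iff).mp h
  have : (i : ℕ) = ((i : ℕ) + 1) % (L.get j).length := congrArg Fin.val this
  exact mod_succ_ne (by omega) i.isLt this.symm

lemma Fc_card (p : Inc L) : (Fc L p).card = 3 := by
  apply Finset.card_eq_three.mpr
  exact ⟨_, _, _, by simp, by simp,
    by simpa using get_ne_next hcycle p.1 p.2, rfl⟩

omit hcycle in
lemma mem_Fc {u : V ⊕ Fin L.length} {p : Inc L} :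
    u ∈ Fc L p ↔ u = Sum.inr p.1 ∨ u = Sum.inl ((L.get p.1).get p.2)
      ∨ u = Sum.inl (nextGet (L.get p.1) p.2) := by
  simp [Fc]

lemma Fc_injective : Function.Injective (Fc L) := by
  intro p q h
  have hj : p.1 = q.1 := by
    have : Sum.inr p.1 ∈ Fc L q := h ▸ (by simp [Fc])
    rcases mem_Fc.mp this with h1 | h1 | h1 <;> simp_all
  obtain ⟨j, i⟩ := p
  obtain ⟨j', i'⟩ := q
  cases hj
  have hnd : (L.get j).Nodup := by simpa using (hcycle _ (List.get_mem L j)).1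
  have hlen : 3 ≤ (L.get j).length := by simpa using (hcycle _ (List.get_mem L j)).2
  congr 1
  -- now i i' : Fin (L.get j).length
  have ha : Sum.inl ((L.get j).get i) ∈ Fc L ⟨j, i'⟩ := h ▸ (by simp [Fc])
  have hb : Sum.inl (nextGet (L.get j) i) ∈ Fc L ⟨j, i'⟩ := h ▸ (by simp [Fc])
  rcases mem_Fc.mp ha with h1 | h1 | h1
  · exact absurd h1 (by simp)
  · exact hnd.get_inj_iff.mp (Sum.inl.inj h1)
  · -- get i = next i'
    rcases mem_Fc.mp hb with h2 | h2 | h2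
    · exact absurd h2 (by simp)
    · -- next i = get i', get i = next i' : contradiction
      exfalso
      have e1 : (i : ℕ) = ((i' : ℕ) + 1) % (L.get j).length :=
        congrArg Fin.val (hnd.get_inj_iff.mp (Sum.inl.inj h1))
      have e2 : ((i : ℕ) + 1) % (L.get j).length = (i' : ℕ) :=
        congrArg Fin.val (hnd.get_inj_iff.mp (Sum.inl.inj h2))
      have e3 : ((i' : ℕ) + 1 + 1) % (L.get j).length = (i' : ℕ) := by
        calc ((i' : ℕ) + 1 + 1) % (L.get j).length
            = (((i' : ℕ) + 1) % (L.get j).length + 1) % (L.get j).length :=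
              (Nat.mod_add_mod _ _ _).symm
          _ = ((i : ℕ) + 1) % (L.get j).length := by rw [← e1]
          _ = (i' : ℕ) := e2
      have h1' : (i' : ℕ) ≡ (i' : ℕ) + 2 [MOD (L.get j).length] := by
        unfold Nat.ModEq
        rw [Nat.mod_eq_of_lt i'.isLt, show (i' : ℕ) + 2 = (i' : ℕ) + 1 + 1 from rfl, e3]
      have h2' : (L.get j).length ∣ 2 := by
        simpa using (Nat.modEq_iff_dvd' (by omega)).mp h1'
      have := Nat.le_of_dvd (by norm_num) h2'
      omega
    · -- next i = next i'
      exfalso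
      have e1 : (i : ℕ) = ((i' : ℕ) + 1) % (L.get j).length :=
        congrArg Fin.val (hnd.get_inj_iff.mp (Sum.inl.inj h1))
      have e2 : ((i : ℕ) + 1) % (L.get j).length = ((i' : ℕ) + 1) % (L.get j).length :=
        congrArg Fin.val (hnd.get_inj_iff.mp (Sum.inl.inj h2))
      have := mod_succ_inj i.isLt i'.isLt e2
      rw [this] at e1
      exact mod_succ_ne (by omega) i'.isLt e1.symm

end StmtAux

namespace StmtAux2
open StmtAux
variable {V : Type} [DecidableEq V] {L : List (List V)}

lemma count_mapEdges (a : Finset V) :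
    Multiset.count a (mapEdges L)
      = (Finset.univ.filter fun p : Inc L => Eed L p = a).card := by
  rw [mapEdges_eq, Multiset.count_map]
  show _ = Multiset.card (Multiset.filter _ _)
  congr 1
  apply Multiset.filter_congr
  intro p _
  exact eq_comm

lemma mem_mapEdges {a : Finset V} : a ∈ mapEdges L ↔ ∃ p : Inc L, Eed L p = a := by
  rw [mapEdges_eq, Multiset.mem_map]
  simp

lemma mem_Eed {z : V} {p : Inc L} :
    z ∈ Eed L p ↔ z = (L.get p.1).get p.2 ∨ z = nextGet (L.get p.1) p.2 := by
  simp [Eed]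

variable (hcycle : ∀ l ∈ L, l.Nodup ∧ 3 ≤ l.length)
include hcycle

lemma filter_faces_card (P : Finset (V ⊕ Fin L.length) → Prop) [DecidablePred P] :
    ((mapSubdivision L).faces.filter P).card
      = (Finset.univ.filter fun p : Inc L => P (Fc L p)).card := by
  rw [faces_eq, Finset.filter_image, Finset.card_image_of_injective _ (Fc_injective hcycle)]

lemma filter_inl_inl {x y : V} (hxy : x ≠ y) :
    (Finset.univ.filter fun p : Inc L =>
        ({Sum.inl x, Sum.inl y} : Finset (V ⊕ Fin L.length)) ⊆ Fc L p)
      = (Finset.univ.filter fun p : Inc L => Eed L p = ({x, y} : Finset V)) := by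
  ext p
  simp only [Finset.mem_filter, Finset.mem_univ, true_and]
  constructor
  · intro h
    have hx : Sum.inl x ∈ Fc L p := h (by simp)
    have hy : Sum.inl y ∈ Fc L p := h (by simp)
    have hx' : x ∈ Eed L p := by
      rcases mem_Fc.mp hx with h1 | h1 | h1 <;>
        simp_all [mem_Eed]
    have hy' : y ∈ Eed L p := by
      rcases mem_Fc.mp hy with h1 | h1 | h1 <;>
        simp_all [mem_Eed]
    have hsub : ({x, y} : Finset V) ⊆ Eed L p := by
      intro z hz
      rcases Finset.mem_insert.mp hz with rfl | hz
      · exact hx'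
      · rw [Finset.mem_singleton.mp hz]; exact hy'
    refine (Finset.eq_of_subset_of_card_le hsub ?_).symm
    rw [Finset.card_pair hxy]
    exact le_trans (Finset.card_insert_le _ _) (by rw [Finset.card_singleton])
  · intro h
    have hx : Sum.inl x ∈ Fc L p := by
      have : x ∈ Eed L p := by rw [h]; simp
      rcases mem_Eed.mp this with h1 | h1 <;> rw [h1] <;> simp [Fc]
    have hy : Sum.inl y ∈ Fc L p := by
      have : y ∈ Eed L p := by rw [h]; simp
      rcases mem_Eed.mp this with h1 | h1 <;> rw [h1] <;> simp [Fc]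
    intro z hz
    rcases Finset.mem_insert.mp hz with rfl | hz
    · exact hx
    · rw [Finset.mem_singleton.mp hz]; exact hy

lemma count_inr_inl {j : Fin L.length} {x : V} (hx : x ∈ L.get j) :
    (Finset.univ.filter fun p : Inc L =>
        ({Sum.inr j, Sum.inl x} : Finset (V ⊕ Fin L.length)) ⊆ Fc L p).card = 2 := by
  have hnd : (L.get j).Nodup := by simpa using (hcycle _ (List.get_mem L j)).1
  have hlen : 3 ≤ (L.get j).length := by simpa using (hcycle _ (List.get_mem L j)).2
  obtain ⟨i₀, hi₀⟩ := List.mem_iff_get.mp hx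
  have hpos : 0 < (L.get j).length := by omega
  set prev : Fin (L.get j).length :=
    ⟨((i₀ : ℕ) + ((L.get j).length - 1)) % (L.get j).length, Nat.mod_lt _ hpos⟩ with hprevdef
  have hprev : ((prev : ℕ) + 1) % (L.get j).length = (i₀ : ℕ) := by
    show (((i₀ : ℕ) + ((L.get j).length - 1)) % (L.get j).length + 1) % (L.get j).length = _
    rw [Nat.mod_add_mod]
    have : (i₀ : ℕ) + ((L.get j).length - 1) + 1 = (i₀ : ℕ) + (L.get j).length := by omega
    rw [this, Nat.add_mod_right, Nat.mod_eq_of_lt i₀.isLt]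
  have hne : i₀ ≠ prev := by
    intro h
    apply mod_succ_ne (n := (L.get j).length) (i := (i₀ : ℕ)) (by omega) i₀.isLt
    conv_lhs => rw [h]
    exact hprev
  have key2 : ∀ p : Inc L, ({Sum.inr j, Sum.inl x} : Finset (V ⊕ Fin L.length)) ⊆ Fc L p →
      p.1 = j := by
    intro p h
    have hr : Sum.inr j ∈ Fc L p := h (by simp)
    rcases mem_Fc.mp hr with h1 | h1 | h1 <;> simp_all
  have key : ∀ i : Fin (L.get j).length,
      (({Sum.inr j, Sum.inl x} : Finset (V ⊕ Fin L.length)) ⊆ Fc L ⟨j, i⟩ ↔ (i = i₀ ∨ i = prev)) := by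
    intro i
    constructor
    · intro h
      have hl : Sum.inl x ∈ Fc L ⟨j, i⟩ := h (by simp)
      rcases mem_Fc.mp hl with h1 | h1 | h1
      · exact absurd h1 (by simp)
      · left
        have : (L.get j).get i = (L.get j).get i₀ := by
          rw [hi₀]; exact (Sum.inl.inj h1).symm
        exact hnd.get_inj_iff.mp this
      · right
        have h2 : (L.get j).get ⟨((i : ℕ) + 1) % (L.get j).length, Nat.mod_lt _ i.pos⟩
            = (L.get j).get i₀ := by
          rw [hi₀]; exact (Sum.inl.inj h1).symm
        have hv : ((i : ℕ) + 1) % (L.get j).length = (i₀ : ℕ) :=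
          congrArg Fin.val (hnd.get_inj_iff.mp h2)
        exact Fin.ext (mod_succ_inj i.isLt prev.isLt (by rw [hv, hprev]))
    · intro h
      rcases h with rfl | rfl
      · intro z hz
        rcases Finset.mem_insert.mp hz with rfl | hz
        · simp [Fc]
        · rw [Finset.mem_singleton.mp hz, ← hi₀]; simp [Fc]
      · intro z hz
        rcases Finset.mem_insert.mp hz with rfl | hz
        · simp [Fc]
        · rw [Finset.mem_singleton.mp hz]
          have hxn : x = nextGet (L.get j) prev := by
            rw [← hi₀]
            show _ = (L.get j).get _
            congr 1
            exact (Fin.ext hprev).symm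
          rw [hxn]; simp [Fc]
  have hfil : (Finset.univ.filter fun p : Inc L =>
      ({Sum.inr j, Sum.inl x} : Finset (V ⊕ Fin L.length)) ⊆ Fc L p)
      = ({⟨j, i₀⟩, ⟨j, prev⟩} : Finset (Inc L)) := by
    ext p
    simp only [Finset.mem_filter, Finset.mem_univ, true_and, Finset.mem_insert,
      Finset.mem_singleton]
    constructor
    · intro h
      have h1 := key2 p h
      obtain ⟨j', i⟩ := p
      dsimp at h1
      subst h1
      rcases (key i).mp h with rfl | rfl
      · left; rfl
      · right; rfl
    · intro h
      rcases h with rfl | rfl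
      · exact (key i₀).mpr (Or.inl rfl)
      · exact (key prev).mpr (Or.inr rfl)
  rw [hfil]
  rw [Finset.card_pair]
  intro h
  exact hne (eq_of_heq (Sigma.mk.inj_iff.mp h).2)

end StmtAux2

namespace StmtAux2
variable {V : Type} [DecidableEq V] {L : List (List V)}

lemma mem_edges_of_subset {e : Finset (V ⊕ Fin L.length)} (p : Inc L)
    (hsub : e ⊆ Fc L p) (hcard : e.card = 2) : e ∈ (mapSubdivision L).edges :=
  Finset.mem_biUnion.mpr ⟨Fc L p,
    by rw [faces_eq]; exact Finset.mem_image_of_mem _ (Finset.mem_univ _),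
    Finset.mem_powersetCard.mpr ⟨hsub, hcard⟩⟩

lemma inl_mem_Fc_of_mem_Eed {z : V} {p : Inc L} (h : z ∈ Eed L p) :
    Sum.inl z ∈ Fc L p := by
  rcases mem_Eed.mp h with h | h <;> rw [h] <;> simp [Fc]

end StmtAux2
/-- If `Γ'` is a closed 2-cell embedding of a connected simple
finite graph in a closed surface `M` (given combinatorially by its list `L` of
face boundary cycles: each boundary is a cycle without repeated vertices of
length at least 3, and every edge lies in exactly two face incidences), then
the subdivision `T(Γ')` obtained by adding one new vertex inside each face and
joining it to all vertices of that face is a triangulation of `M`: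
all its faces are triangles, every edge lies in exactly two faces, two faces
meet in at most an edge, all edges are simple (two distinct endpoints), and
the embedded graph is connected. -/
theorem stmt8 {V : Type} [DecidableEq V] (L : List (List V)) (hL : L ≠ [])
    (hcycle : ∀ l ∈ L, l.Nodup ∧ 3 ≤ l.length)
    (hedge2 : ∀ a ∈ mapEdges L, (mapEdges L).count a = 2)
    (hconn : (mapGraph L).Connected) :
    (mapSubdivision L).IsProper ∧
    (∀ a ∈ (mapSubdivision L).edges, a.card = 2) ∧
    (mapSubdivision L).graph.Connected := by
  classical
  have hpos : ∀ j : Fin L.length, 0 < (L.get j).length := fun j => by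
    have : 3 ≤ (L.get j).length := by simpa using (hcycle _ (List.get_mem L j)).2
    omega
  have faces3 : ∀ f ∈ (mapSubdivision L).faces, f.card = 3 := by
    intro f hf
    rw [faces_eq] at hf
    obtain ⟨p, -, rfl⟩ := Finset.mem_image.mp hf
    exact StmtAux.Fc_card hcycle p
  refine ⟨⟨faces3, ?_, ?_⟩, ?_, ?_⟩
  · -- every edge in exactly two faces
    intro e he
    obtain ⟨f, hf, he2⟩ := Finset.mem_biUnion.mp he
    rw [faces_eq] at hf
    obtain ⟨p₀, -, rfl⟩ := Finset.mem_image.mp hf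
    obtain ⟨hsub, hcard⟩ := Finset.mem_powersetCard.mp he2
    obtain ⟨u, v, huv, rfl⟩ := Finset.card_eq_two.mp hcard
    have hu : u ∈ Fc L p₀ := hsub (by simp)
    have hv : v ∈ Fc L p₀ := hsub (by simp)
    rcases u with x | j <;> rcases v with y | j'
    · -- inl inl
      have hxy : x ≠ y := fun h => huv (by rw [h])
      rw [StmtAux2.filter_faces_card hcycle, StmtAux2.filter_inl_inl hcycle hxy,
        ← StmtAux2.count_mapEdges]
      apply hedge2
      have hp₀ : p₀ ∈ Finset.univ.filter fun p : Inc L => Eed L p = ({x, y} : Finset V) := by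
        rw [← StmtAux2.filter_inl_inl hcycle hxy]
        exact Finset.mem_filter.mpr ⟨Finset.mem_univ _, hsub⟩
      exact StmtAux2.mem_mapEdges.mpr ⟨p₀, (Finset.mem_filter.mp hp₀).2⟩
    · -- inl x, inr j'
      have hj : p₀.1 = j' := by
        rcases StmtAux.mem_Fc.mp hv with h1 | h1 | h1 <;> simp_all
      have hx : x ∈ L.get j' := by
        rw [← hj]
        rcases StmtAux.mem_Fc.mp hu with h1 | h1 | h1
        · exact absurd h1 (by simp)
        · rw [Sum.inl.inj h1]
          exact List.get_mem _ _
        · rw [Sum.inl.inj h1]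
          exact List.get_mem _ _
      rw [Finset.pair_comm (Sum.inl x) (Sum.inr j'), StmtAux2.filter_faces_card hcycle]
      exact StmtAux2.count_inr_inl hcycle hx
    · -- inr j, inl y
      have hj : p₀.1 = j := by
        rcases StmtAux.mem_Fc.mp hu with h1 | h1 | h1 <;> simp_all
      have hy : y ∈ L.get j := by
        rw [← hj]
        rcases StmtAux.mem_Fc.mp hv with h1 | h1 | h1
        · exact absurd h1 (by simp)
        · rw [Sum.inl.inj h1]
          exact List.get_mem _ _
        · rw [Sum.inl.inj h1]
          exact List.get_mem _ _
      rw [StmtAux2.filter_faces_card hcycle]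
      exact StmtAux2.count_inr_inl hcycle hy
    · -- inr inr : impossible
      exfalso
      have h1 : j = p₀.1 := by
        rcases StmtAux.mem_Fc.mp hu with h1 | h1 | h1 <;> simp_all
      have h2 : j' = p₀.1 := by
        rcases StmtAux.mem_Fc.mp hv with h1 | h1 | h1 <;> simp_all
      exact huv (by rw [h1, h2])
  · -- two faces meet in at most an edge
    intro f hf g hg hne
    by_contra hlt
    push_neg at hlt
    have h1 : f ∩ g = f :=
      Finset.eq_of_subset_of_card_le Finset.inter_subset_left
        (by rw [faces3 f hf]; omega)
    have h2 : f ∩ g = g :=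
      Finset.eq_of_subset_of_card_le Finset.inter_subset_right
        (by rw [faces3 g hg]; omega)
    exact hne (h1 ▸ h2)
  · -- edges have two elements
    intro a ha
    obtain ⟨f, -, ha2⟩ := Finset.mem_biUnion.mp ha
    exact (Finset.mem_powersetCard.mp ha2).2
  · -- connectivity
    have homAdj : ∀ x y : V, (mapGraph L).Adj x y →
        (mapSubdivision L).graph.Adj (Sum.inl x) (Sum.inl y) := by
      intro x y h
      obtain ⟨hne, hmem⟩ := h
      obtain ⟨p, hp⟩ := StmtAux2.mem_mapEdges.mp hmem
      refine ⟨by simpa using hne, StmtAux2.mem_edges_of_subset p ?_ ?_⟩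
      · intro z hz
        rcases Finset.mem_insert.mp hz with rfl | hz
        · exact StmtAux2.inl_mem_Fc_of_mem_Eed (by rw [hp]; simp)
        · rw [Finset.mem_singleton.mp hz]
          exact StmtAux2.inl_mem_Fc_of_mem_Eed (by rw [hp]; simp)
      · exact Finset.card_pair (by simpa using hne)
    have reachInl : ∀ x y : V,
        (mapSubdivision L).graph.Reachable (Sum.inl x) (Sum.inl y) :=
      fun x y => by
        exact SimpleGraph.Reachable.map
          (⟨Sum.inl, fun {a b} h => homAdj a b h⟩ : mapGraph L →g (mapSubdivision L).graph)
          (hconn.preconnected x y)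
    have adjr : ∀ j : Fin L.length, (mapSubdivision L).graph.Adj (Sum.inr j)
        (Sum.inl ((L.get j).get ⟨0, hpos j⟩)) := by
      intro j
      refine ⟨by simp, StmtAux2.mem_edges_of_subset ⟨j, ⟨0, hpos j⟩⟩ ?_ ?_⟩
      · intro z hz
        rcases Finset.mem_insert.mp hz with rfl | hz
        · simp [Fc]
        · rw [Finset.mem_singleton.mp hz]; simp [Fc]
      · exact Finset.card_pair (by simp)
    rw [SimpleGraph.connected_iff]
    refine ⟨?_, ⟨Sum.inr ⟨0, List.length_pos_iff.mpr hL⟩⟩⟩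
    intro u v
    rcases u with x | j <;> rcases v with y | j'
    · exact reachInl x y
    · exact (reachInl x _).trans (adjr j').reachable.symm
    · exact (adjr j).reachable.trans (reachInl _ y)
    · exact ((adjr j).reachable.trans (reachInl _ _)).trans (adjr j').reachable.symm
end
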